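/- arXiv:2203.04536 — 4 statements merged into one kernel-verified Lean document; each statement's English description precedes it below -/
import Mathlib

section
/- Let D ⊆ [−1,1]^X be a distinguisher class and ε > 0. If x₁,…,x_n ∈ X are 6ε-fat shattered by D, and μ is the uniform distribution over {x₁,…,x_n}, then log N_{μ,D}([0,1]^X, ε) ≥ n/8. -/
open scoped ENNReal Pointwise

noncomputable section

namespace OI

/-- Expectation of a real-valued function under a probability mass function. -/
def pexp {α : Type*} (q : PMF α) (f : α → ℝ) : ℝ := ∑' a, (q a).toReal * f a

/-- Inner product of two functions w.r.t. the distribution `μ`. -/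
def inn {X : Type*} (μ : PMF X) (f g : X → ℝ) : ℝ := pexp μ fun x => f x * g x

/-- Dual Minkowski (semi)norm of `f` w.r.t. the class `F`. -/
def dnorm {X : Type*} (μ : PMF X) (F : Set (X → ℝ)) (f : X → ℝ) : ℝ :=
  sSup ((fun g => |inn μ f g|) '' F)

/-- `C` is an ε-covering of `G` w.r.t. the seminorm defined by `F`. -/
def IsCover {X : Type*} (μ : PMF X) (F G : Set (X → ℝ)) (ε : ℝ) (C : Set (X → ℝ)) : Prop :=
  C ⊆ G ∧ ∀ g ∈ G, ∃ c ∈ C, dnorm μ F (g - c) ≤ ε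

/-- Covering number `N_{μ,F}(G, ε)` (`⊤` if no finite covering exists). -/
def covN {X : Type*} (μ : PMF X) (F G : Set (X → ℝ)) (ε : ℝ) : ℕ∞ :=
  ⨅ (C : Set (X → ℝ)) (_ : IsCover μ F G ε C), C.encard

/-- Base-2 logarithm of an extended natural number (junk value on `⊤`). -/
def elog2 (N : ℕ∞) : ℝ := Real.logb 2 (N.toNat : ℝ)

/-- Bernoulli distribution on `Bool` with mean (the truncation to `[0,1]` of) `r`. -/
def bern (r : ℝ) : PMF Bool := PMF.bernoulli (min (Real.toNNReal r) 1) (min_le_right _ _)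

/-- The distribution `μ_p` of individual-outcome pairs. -/
def exDist {X : Type*} (μ : PMF X) (p : X → ℝ) : PMF (X × Bool) :=
  μ.bind fun x => (bern (p x)).map fun o => (x, o)

/-- `n` i.i.d. samples from `q`. -/
def iid {α : Type*} (q : PMF α) : (n : ℕ) → PMF (Fin n → α)
  | 0 => PMF.pure Fin.elim0
  | n + 1 => (iid q n).bind fun v => q.map fun a => Fin.cons a v

/-- Probability of an event under a PMF. -/
def prob {α : Type*} (q : PMF α) (E : Set α) : ℝ≥0∞ := q.toOuterMeasure E

/-- A (possibly randomized) `n`-sample learner. -/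
abbrev Learner (X : Type*) (n : ℕ) := (Fin n → X × Bool) → PMF (X → ℝ)

/-- Distribution of the learner output on `n` i.i.d. samples from `μ_{p*}`. -/
def outDist {X : Type*} (μ : PMF X) (pstar : X → ℝ) {n : ℕ} (A : Learner X n) :
    PMF (X → ℝ) :=
  (iid (exDist μ pstar) n).bind A

/-- `p` is a predictor, i.e. takes values in `[0,1]`. -/
def Predictor {X : Type*} (p : X → ℝ) : Prop := ∀ x, p x ∈ Set.Icc (0 : ℝ) 1

/-- `d` takes values in `[-1,1]`. -/
def Dist1 {X : Type*} (d : X → ℝ) : Prop := ∀ x, d x ∈ Set.Icc (-1 : ℝ) 1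

/-- The class `[0,1]^X` of all predictors. -/
def allPred (X : Type*) : Set (X → ℝ) := {p | Predictor p}

/-- The learner `A` succeeds for target `pstar`: with probability at least `1 - δ` it outputs
a predictor whose maximum distinguishing advantage w.r.t. `pstar` over `D` is at most `ε`. -/
def Achieves {X : Type*} (μ : PMF X) (D : Set (X → ℝ)) (ε δ : ℝ) (pstar : X → ℝ) {n : ℕ}
    (A : Learner X n) : Prop :=
  ENNReal.ofReal (1 - δ) ≤
    prob (outDist μ pstar A) {p | Predictor p ∧ dnorm μ D (p - pstar) ≤ ε}

/-- The agnostic benchmark `inf_{p' ∈ P} ‖p' - pstar‖_{μ,D}`. -/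
def agTarget {X : Type*} (μ : PMF X) (P D : Set (X → ℝ)) (pstar : X → ℝ) : ℝ :=
  sInf ((fun p' => dnorm μ D (p' - pstar)) '' P)

/-- The learner `A` succeeds agnostically for target `pstar`. -/
def AchievesAg {X : Type*} (μ : PMF X) (P D : Set (X → ℝ)) (ε δ : ℝ) (pstar : X → ℝ) {n : ℕ}
    (A : Learner X n) : Prop :=
  ENNReal.ofReal (1 - δ) ≤
    prob (outDist μ pstar A)
      {p | Predictor p ∧ dnorm μ D (p - pstar) ≤ agTarget μ P D pstar + ε}

/-- Distribution-specific realizable OI learner. -/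
def DSRL {X : Type*} (μ : PMF X) (P D : Set (X → ℝ)) (ε δ : ℝ) (n : ℕ)
    (A : Learner X n) : Prop :=
  ∀ pstar ∈ P, Achieves μ D ε δ pstar A

/-- Distribution-specific agnostic OI learner. -/
def DSAL {X : Type*} (μ : PMF X) (P D : Set (X → ℝ)) (ε δ : ℝ) (n : ℕ)
    (A : Learner X n) : Prop :=
  ∀ pstar : X → ℝ, Predictor pstar → AchievesAg μ P D ε δ pstar A

/-- Distribution-free realizable OI learner. -/
def DFRL {X : Type*} (P D : Set (X → ℝ)) (ε δ : ℝ) (n : ℕ) (A : Learner X n) : Prop :=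
  ∀ μ : PMF X, DSRL μ P D ε δ n A

/-- Distribution-free agnostic OI learner. -/
def DFAL {X : Type*} (P D : Set (X → ℝ)) (ε δ : ℝ) (n : ℕ) (A : Learner X n) : Prop :=
  ∀ μ : PMF X, DSAL μ P D ε δ n A

/-- Sample complexity of distribution-specific realizable OI. -/
def SAMPDSR {X : Type*} (μ : PMF X) (P D : Set (X → ℝ)) (ε δ : ℝ) : ℕ∞ :=
  ⨅ (n : ℕ) (_ : ∃ A : Learner X n, DSRL μ P D ε δ n A), (n : ℕ∞)

/-- Sample complexity of distribution-specific agnostic OI. -/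
def SAMPDSA {X : Type*} (μ : PMF X) (P D : Set (X → ℝ)) (ε δ : ℝ) : ℕ∞ :=
  ⨅ (n : ℕ) (_ : ∃ A : Learner X n, DSAL μ P D ε δ n A), (n : ℕ∞)

/-- Sample complexity of distribution-free realizable OI. -/
def SAMPDFR {X : Type*} (P D : Set (X → ℝ)) (ε δ : ℝ) : ℕ∞ :=
  ⨅ (n : ℕ) (_ : ∃ A : Learner X n, DFRL P D ε δ n A), (n : ℕ∞)

/-- Sample complexity of distribution-free agnostic OI. -/
def SAMPDFA {X : Type*} (P D : Set (X → ℝ)) (ε δ : ℝ) : ℕ∞ :=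
  ⨅ (n : ℕ) (_ : ∃ A : Learner X n, DFAL P D ε δ n A), (n : ℕ∞)

/-- The points `x 0, …, x (n-1)` are `γ`-fat shattered by `F`. -/
def Shatters {X : Type*} (F : Set (X → ℝ)) (γ : ℝ) {n : ℕ} (x : Fin n → X) : Prop :=
  ∃ r : Fin n → ℝ, ∀ b : Fin n → Bool, ∃ f ∈ F,
    ∀ i, γ ≤ (if b i then (1 : ℝ) else -1) * (f (x i) - r i)

/-- The `γ`-fat-shattering dimension of `F`. -/
def fatDim {X : Type*} (F : Set (X → ℝ)) (γ : ℝ) : ℕ∞ :=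
  ⨆ (n : ℕ) (_ : ∃ x : Fin n → X, Shatters F γ x), (n : ℕ∞)

end OI


open OI

section Aux
set_option linter.unusedSectionVars false

open Finset

variable {X : Type} [Nonempty X] [DecidableEq X]

lemma shatters_inj {D : Set (X → ℝ)} {γ : ℝ} (hγ : 0 < γ) {n : ℕ} {x : Fin n → X}
    (hx : Shatters D γ x) : Function.Injective x := by
  obtain ⟨r, hr⟩ := hx
  intro i j hij
  by_contra hij'
  obtain ⟨f, _, hf⟩ := hr (fun k => decide (k = i))
  obtain ⟨g, _, hg⟩ := hr (fun k => decide (k = j))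
  have h1 := hf i
  have h2 := hf j
  have h3 := hg i
  have h4 := hg j
  simp only [decide_eq_true_eq, if_pos rfl, if_neg hij', if_neg (Ne.symm hij'),
    eq_self_iff_true, if_true, one_mul, neg_one_mul] at h1 h2 h3 h4
  rw [hij] at h1 h3
  linarith

lemma inn_uniform {n : ℕ} {x : Fin n → X} (hinj : Function.Injective x)
    (hne : (Finset.image x Finset.univ).Nonempty) (f g : X → ℝ) :
    inn (PMF.uniformOfFinset (Finset.image x Finset.univ) hne) f g
      = (∑ i : Fin n, f (x i) * g (x i)) / n := by
  classical
  have hcard : (Finset.image x Finset.univ).card = n := by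
    rw [Finset.card_image_of_injective _ hinj, Finset.card_univ, Fintype.card_fin]
  unfold inn pexp
  rw [tsum_eq_sum (s := Finset.image x Finset.univ)
    (by intro y hy; rw [PMF.uniformOfFinset_apply_of_notMem hne hy]; simp)]
  rw [Finset.sum_image (fun a _ b _ h => hinj h)]
  have : ∀ i : Fin n,
      (PMF.uniformOfFinset (Finset.image x Finset.univ) hne (x i)).toReal * (f (x i) * g (x i))
        = (f (x i) * g (x i)) / n := by
    intro i
    rw [PMF.uniformOfFinset_apply_of_mem hne (Finset.mem_image_of_mem x (Finset.mem_univ i))]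
    rw [hcard]
    simp [ENNReal.toReal_inv, div_eq_inv_mul]
  rw [Finset.sum_congr rfl (fun i _ => this i), Finset.sum_div]

lemma inn_abs_le {n : ℕ} {x : Fin n → X} (hinj : Function.Injective x)
    (hne : (Finset.image x Finset.univ).Nonempty) {d : X → ℝ} (hd : Dist1 d) (q : X → ℝ) :
    |inn (PMF.uniformOfFinset (Finset.image x Finset.univ) hne) q d|
      ≤ (∑ i : Fin n, |q (x i)|) / n := by
  rw [inn_uniform hinj hne, abs_div, abs_of_nonneg (by positivity : (0:ℝ) ≤ (n:ℝ))]
  have hnum : |∑ i : Fin n, q (x i) * d (x i)| ≤ ∑ i : Fin n, |q (x i)| := by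
    refine (Finset.abs_sum_le_sum_abs _ _).trans (Finset.sum_le_sum fun i _ => ?_)
    rw [abs_mul]
    have h1 : |d (x i)| ≤ 1 := abs_le.mpr ⟨(hd (x i)).1, (hd (x i)).2⟩
    nlinarith [abs_nonneg (q (x i))]
  gcongr

lemma dnorm_le {n : ℕ} {x : Fin n → X} (hinj : Function.Injective x)
    (hne : (Finset.image x Finset.univ).Nonempty)
    {D : Set (X → ℝ)} (hD : ∀ d ∈ D, Dist1 d) (q : X → ℝ) :
    dnorm (PMF.uniformOfFinset (Finset.image x Finset.univ) hne) D q
      ≤ (∑ i : Fin n, |q (x i)|) / n := by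
  apply Real.sSup_le
  · rintro z ⟨d, hd, rfl⟩
    exact inn_abs_le hinj hne (hD d hd) q
  · positivity

lemma l1_le_of_dnorm_le {D : Set (X → ℝ)} (hD : ∀ d ∈ D, Dist1 d) {ε : ℝ} (hε : 0 < ε)
    {n : ℕ} {x : Fin n → X} (hx : Shatters D (6 * ε) x) (hinj : Function.Injective x)
    (hne : (Finset.image x Finset.univ).Nonempty) (q : X → ℝ)
    (hq : dnorm (PMF.uniformOfFinset (Finset.image x Finset.univ) hne) D q ≤ ε) :
    ∑ i : Fin n, |q (x i)| ≤ (n : ℝ) / 6 := by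
  obtain ⟨r, hr⟩ := hx
  obtain ⟨dp, hdpD, hdp⟩ := hr (fun i => decide (0 ≤ q (x i)))
  obtain ⟨dm, hdmD, hdm⟩ := hr (fun i => !(decide (0 ≤ q (x i))))
  set μ := PMF.uniformOfFinset (Finset.image x Finset.univ) hne with hμ
  have hbdd : BddAbove ((fun g => |inn μ q g|) '' D) := by
    refine ⟨(∑ i : Fin n, |q (x i)|) / n, ?_⟩
    rintro z ⟨d, hd, rfl⟩
    exact inn_abs_le hinj hne (hD d hd) q
  have h1 : inn μ q dp ≤ ε :=
    le_trans (le_trans (le_abs_self _) (le_csSup hbdd ⟨dp, hdpD, rfl⟩)) hq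
  have h2 : -inn μ q dm ≤ ε :=
    le_trans (le_trans (neg_le_abs _) (le_csSup hbdd ⟨dm, hdmD, rfl⟩)) hq
  have key : ∀ i : Fin n, 12 * ε * |q (x i)| ≤ q (x i) * (dp (x i) - dm (x i)) := by
    intro i
    have hp := hdp i
    have hm := hdm i
    by_cases h : 0 ≤ q (x i)
    · simp [h] at hp hm
      rw [abs_of_nonneg h]
      nlinarith
    · simp [h] at hp hm
      rw [abs_of_neg (not_le.1 h)]
      nlinarith [not_le.1 h]
  have hsum : 12 * ε * ∑ i : Fin n, |q (x i)|
      ≤ ∑ i : Fin n, q (x i) * (dp (x i) - dm (x i)) := by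
    rw [Finset.mul_sum]
    exact Finset.sum_le_sum fun i _ => key i
  have hn0 : (0:ℝ) ≤ (n:ℝ) := Nat.cast_nonneg n
  have hexp : ∑ i : Fin n, q (x i) * (dp (x i) - dm (x i))
      = (n : ℝ) * inn μ q dp - (n : ℝ) * inn μ q dm := by
    rw [hμ, inn_uniform hinj hne, inn_uniform hinj hne]
    rcases Nat.eq_zero_or_pos n with h0 | h0
    · subst h0; simp
    have hne' : (n : ℝ) ≠ 0 := by positivity
    field_simp
    rw [← Finset.sum_sub_distrib]
    exact Finset.sum_congr rfl fun i _ => by ring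
  have hfin : 12 * ε * ∑ i : Fin n, |q (x i)| ≤ (n : ℝ) * ε + (n : ℝ) * ε := by
    rw [hexp] at hsum
    nlinarith [mul_le_mul_of_nonneg_left h1 hn0, mul_le_mul_of_nonneg_left h2 hn0]
  nlinarith [hfin, hε]

lemma level_exists (c : ℝ) : ∃ ℓ : Fin 4 → Fin 4, Function.Injective ℓ ∧
    ∀ j : Fin 4, ((ℓ j : ℕ) : ℝ) / 6 ≤ |((j : ℕ) : ℝ) / 3 - c| := by
  rcases lt_or_ge c (1/6) with hc | hc
  · refine ⟨![0, 1, 2, 3], by decide, ?_⟩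
    intro j
    fin_cases j
    · show ((0 : ℕ) : ℝ) / 6 ≤ |((0 : ℕ) : ℝ) / 3 - c|
      simpa using abs_nonneg (((0 : ℕ) : ℝ) / 3 - c)
    · show ((1 : ℕ) : ℝ) / 6 ≤ |((1 : ℕ) : ℝ) / 3 - c|
      rw [le_abs]
      left
      push_cast
      linarith
    · show ((2 : ℕ) : ℝ) / 6 ≤ |((2 : ℕ) : ℝ) / 3 - c|
      rw [le_abs]
      left
      push_cast
      linarith
    · show ((3 : ℕ) : ℝ) / 6 ≤ |((3 : ℕ) : ℝ) / 3 - c|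
      rw [le_abs]
      left
      push_cast
      linarith
  rcases lt_or_ge c (1/3) with hc2 | hc2
  · refine ⟨![1, 0, 2, 3], by decide, ?_⟩
    intro j
    fin_cases j
    · show ((1 : ℕ) : ℝ) / 6 ≤ |((0 : ℕ) : ℝ) / 3 - c|
      rw [le_abs]
      right
      push_cast
      linarith
    · show ((0 : ℕ) : ℝ) / 6 ≤ |((1 : ℕ) : ℝ) / 3 - c|
      simpa using abs_nonneg (((1 : ℕ) : ℝ) / 3 - c)
    · show ((2 : ℕ) : ℝ) / 6 ≤ |((2 : ℕ) : ℝ) / 3 - c|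
      rw [le_abs]
      left
      push_cast
      linarith
    · show ((3 : ℕ) : ℝ) / 6 ≤ |((3 : ℕ) : ℝ) / 3 - c|
      rw [le_abs]
      left
      push_cast
      linarith
  rcases lt_or_ge c (1/2) with hc3 | hc3
  · refine ⟨![2, 0, 1, 3], by decide, ?_⟩
    intro j
    fin_cases j
    · show ((2 : ℕ) : ℝ) / 6 ≤ |((0 : ℕ) : ℝ) / 3 - c|
      rw [le_abs]
      right
      push_cast
      linarith
    · show ((0 : ℕ) : ℝ) / 6 ≤ |((1 : ℕ) : ℝ) / 3 - c|
      simpa using abs_nonneg (((1 : ℕ) : ℝ) / 3 - c)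
    · show ((1 : ℕ) : ℝ) / 6 ≤ |((2 : ℕ) : ℝ) / 3 - c|
      rw [le_abs]
      left
      push_cast
      linarith
    · show ((3 : ℕ) : ℝ) / 6 ≤ |((3 : ℕ) : ℝ) / 3 - c|
      rw [le_abs]
      left
      push_cast
      linarith
  rcases lt_or_ge c (2/3) with hc4 | hc4
  · refine ⟨![3, 1, 0, 2], by decide, ?_⟩
    intro j
    fin_cases j
    · show ((3 : ℕ) : ℝ) / 6 ≤ |((0 : ℕ) : ℝ) / 3 - c|
      rw [le_abs]
      right
      push_cast
      linarith
    · show ((1 : ℕ) : ℝ) / 6 ≤ |((1 : ℕ) : ℝ) / 3 - c|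
      rw [le_abs]
      right
      push_cast
      linarith
    · show ((0 : ℕ) : ℝ) / 6 ≤ |((2 : ℕ) : ℝ) / 3 - c|
      simpa using abs_nonneg (((2 : ℕ) : ℝ) / 3 - c)
    · show ((2 : ℕ) : ℝ) / 6 ≤ |((3 : ℕ) : ℝ) / 3 - c|
      rw [le_abs]
      left
      push_cast
      linarith
  rcases lt_or_ge c (5/6) with hc5 | hc5
  · refine ⟨![3, 2, 0, 1], by decide, ?_⟩
    intro j
    fin_cases j
    · show ((3 : ℕ) : ℝ) / 6 ≤ |((0 : ℕ) : ℝ) / 3 - c|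
      rw [le_abs]
      right
      push_cast
      linarith
    · show ((2 : ℕ) : ℝ) / 6 ≤ |((1 : ℕ) : ℝ) / 3 - c|
      rw [le_abs]
      right
      push_cast
      linarith
    · show ((0 : ℕ) : ℝ) / 6 ≤ |((2 : ℕ) : ℝ) / 3 - c|
      simpa using abs_nonneg (((2 : ℕ) : ℝ) / 3 - c)
    · show ((1 : ℕ) : ℝ) / 6 ≤ |((3 : ℕ) : ℝ) / 3 - c|
      rw [le_abs]
      left
      push_cast
      linarith
  · refine ⟨![3, 2, 1, 0], by decide, ?_⟩
    intro j
    fin_cases j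
    · show ((3 : ℕ) : ℝ) / 6 ≤ |((0 : ℕ) : ℝ) / 3 - c|
      rw [le_abs]
      right
      push_cast
      linarith
    · show ((2 : ℕ) : ℝ) / 6 ≤ |((1 : ℕ) : ℝ) / 3 - c|
      rw [le_abs]
      right
      push_cast
      linarith
    · show ((1 : ℕ) : ℝ) / 6 ≤ |((2 : ℕ) : ℝ) / 3 - c|
      rw [le_abs]
      right
      push_cast
      linarith
    · show ((0 : ℕ) : ℝ) / 6 ≤ |((3 : ℕ) : ℝ) / 3 - c|
      simpa using abs_nonneg (((3 : ℕ) : ℝ) / 3 - c)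

lemma count_T {n : ℕ} :
    (((Finset.univ.filter (fun t : Fin n → Fin 4 => ∑ i, ((t i : ℕ)) ≤ n)).card : ℕ) : ℝ)
      ≤ (65 / 18 : ℝ) ^ n := by
  classical
  set T := Finset.univ.filter (fun t : Fin n → Fin 4 => ∑ i, ((t i : ℕ)) ≤ n) with hT
  have key : ∀ t ∈ T, (1:ℝ) ≤ (3/2) ^ n * ∏ i : Fin n, (2/3 : ℝ) ^ ((t i : ℕ)) := by
    intro t ht
    rw [hT, Finset.mem_filter] at ht
    have hprod : ∏ i : Fin n, (2/3 : ℝ) ^ ((t i : ℕ)) = (2/3 : ℝ) ^ (∑ i, (t i : ℕ)) :=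
      Finset.prod_pow_eq_pow_sum _ _ _
    have hge : (2/3 : ℝ) ^ n ≤ (2/3 : ℝ) ^ (∑ i, (t i : ℕ)) :=
      pow_le_pow_of_le_one (by norm_num) (by norm_num) ht.2
    rw [hprod]
    calc (1:ℝ) = (3/2) ^ n * (2/3) ^ n := by rw [← mul_pow]; norm_num
      _ ≤ _ := by
          apply mul_le_mul_of_nonneg_left hge
          positivity
  calc ((T.card : ℕ) : ℝ) = ∑ _t ∈ T, (1:ℝ) := by simp
    _ ≤ ∑ t ∈ T, (3/2) ^ n * ∏ i : Fin n, (2/3 : ℝ) ^ ((t i : ℕ)) :=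
        Finset.sum_le_sum key
    _ ≤ ∑ t : Fin n → Fin 4, (3/2) ^ n * ∏ i : Fin n, (2/3 : ℝ) ^ ((t i : ℕ)) := by
        apply Finset.sum_le_sum_of_subset_of_nonneg (Finset.filter_subset _ _)
        intro t _ _
        positivity
    _ = (3/2) ^ n * ∑ t : Fin n → Fin 4, ∏ i : Fin n, (2/3 : ℝ) ^ ((t i : ℕ)) := by
        rw [Finset.mul_sum]
    _ = (3/2) ^ n * ∏ i : Fin n, ∑ j : Fin 4, (2/3 : ℝ) ^ ((j : ℕ)) := by
        rw [Finset.prod_univ_sum, Fintype.piFinset_univ]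
    _ = (3/2) ^ n * (65/27) ^ n := by
        congr 1
        rw [Finset.prod_const, Finset.card_univ, Fintype.card_fin]
        congr 1
        rw [Fin.sum_univ_four]
        norm_num [show ((0 : Fin 4) : ℕ) = 0 from rfl, show ((1 : Fin 4) : ℕ) = 1 from rfl,
          show ((2 : Fin 4) : ℕ) = 2 from rfl, show ((3 : Fin 4) : ℕ) = 3 from rfl]
    _ = (65 / 18 : ℝ) ^ n := by rw [← mul_pow]; norm_num

lemma count_ball {n : ℕ} (c : Fin n → ℝ) :
    (((Finset.univ.filter
        (fun v : Fin n → Fin 4 => ∑ i, |((v i : ℕ) : ℝ) / 3 - c i| ≤ (n : ℝ) / 6)).card : ℕ) : ℝ)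
      ≤ (65 / 18 : ℝ) ^ n := by
  classical
  refine le_trans ?_ count_T
  have hcard : (Finset.univ.filter
        (fun v : Fin n → Fin 4 => ∑ i, |((v i : ℕ) : ℝ) / 3 - c i| ≤ (n : ℝ) / 6)).card
      ≤ (Finset.univ.filter (fun t : Fin n → Fin 4 => ∑ i, ((t i : ℕ)) ≤ n)).card := by
    choose ℓ hℓinj hℓle using fun i => level_exists (c i)
    apply Finset.card_le_card_of_injOn (fun v i => ℓ i (v i))
    · intro v hv
      rw [Finset.mem_coe, Finset.mem_filter] at hv ⊢
      refine ⟨Finset.mem_univ _, ?_⟩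
      have hreal : (∑ i, ((ℓ i (v i) : ℕ)) : ℝ) ≤ (n : ℝ) := by
        push_cast
        have : ∑ i, (((ℓ i (v i) : ℕ)) : ℝ) / 6 ≤ (n : ℝ) / 6 :=
          le_trans (Finset.sum_le_sum fun i _ => hℓle i (v i)) hv.2
        rw [← Finset.sum_div] at this
        linarith
      exact_mod_cast hreal
    · intro a _ b _ hab
      funext i
      exact hℓinj i (congrFun hab i)
  exact_mod_cast hcard

/-- Grid predictor supported on the image of `x`. -/
def gridFn {n : ℕ} (x : Fin n → X) (m : ℕ) (v : Fin n → Fin (m + 1)) : X → ℝ :=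
  fun y => if h : ∃ i, x i = y then ((v h.choose : ℕ) : ℝ) / m else 0

lemma gridFn_apply {n : ℕ} {x : Fin n → X} (hinj : Function.Injective x) (m : ℕ)
    (v : Fin n → Fin (m + 1)) (i : Fin n) :
    gridFn x m v (x i) = ((v i : ℕ) : ℝ) / m := by
  have h : ∃ i', x i' = x i := ⟨i, rfl⟩
  simp only [gridFn, dif_pos h]
  rw [hinj h.choose_spec]

lemma gridFn_mem_allPred {n : ℕ} (x : Fin n → X) {m : ℕ} (hm : 0 < m)
    (v : Fin n → Fin (m + 1)) : gridFn x m v ∈ allPred X := by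
  intro y
  unfold gridFn
  split
  · constructor
    · positivity
    · rw [div_le_one (by exact_mod_cast hm)]
      exact_mod_cast Nat.lt_succ_iff.mp (Fin.is_lt _)
  · exact ⟨le_refl 0, zero_le_one⟩

lemma cover_card_lb {D : Set (X → ℝ)} (hDne : D.Nonempty) (hD : ∀ d ∈ D, Dist1 d)
    {ε : ℝ} (hε : 0 < ε) {n : ℕ} {x : Fin n → X} (hx : Shatters D (6 * ε) x)
    (hinj : Function.Injective x) (hne : (Finset.image x Finset.univ).Nonempty)
    {C : Set (X → ℝ)} (hCf : C.Finite)
    (hC : IsCover (PMF.uniformOfFinset (Finset.image x Finset.univ) hne) D (allPred X) ε C) :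
    (4 : ℝ) ^ n ≤ (hCf.toFinset.card : ℝ) * (65 / 18 : ℝ) ^ n := by
  classical
  have hΦpred : ∀ v : Fin n → Fin 4, gridFn x 3 v ∈ allPred X :=
    fun v => gridFn_mem_allPred x (by norm_num) v
  choose cov hcovC hcovd using fun v : Fin n → Fin 4 => hC.2 (gridFn x 3 v) (hΦpred v)
  have hl1 : ∀ v : Fin n → Fin 4,
      ∑ i : Fin n, |((v i : ℕ) : ℝ) / 3 - cov v (x i)| ≤ (n : ℝ) / 6 := by
    intro v
    have h := l1_le_of_dnorm_le hD hε hx hinj hne _ (hcovd v)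
    refine le_trans (le_of_eq (Finset.sum_congr rfl fun i _ => ?_)) h
    rw [Pi.sub_apply, gridFn_apply hinj]
    norm_num
  have hsub : (Finset.univ : Finset (Fin n → Fin 4))
      ⊆ hCf.toFinset.biUnion (fun c => Finset.univ.filter (fun v => cov v = c)) := by
    intro v _
    rw [Finset.mem_biUnion]
    exact ⟨cov v, hCf.mem_toFinset.2 (hcovC v), Finset.mem_filter.2 ⟨Finset.mem_univ _, rfl⟩⟩
  have hcount : (4 : ℕ) ^ n
      ≤ ∑ c ∈ hCf.toFinset, (Finset.univ.filter (fun v => cov v = c)).card := by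
    calc (4:ℕ)^n = (Finset.univ : Finset (Fin n → Fin 4)).card := by
          simp [Finset.card_univ]
      _ ≤ _ := le_trans (Finset.card_le_card hsub) Finset.card_biUnion_le
  have hball : ∀ c : X → ℝ,
      ((Finset.univ.filter (fun v => cov v = c)).card : ℝ) ≤ (65/18 : ℝ) ^ n := by
    intro c
    refine le_trans ?_ (count_ball (fun i => c (x i)))
    norm_cast
    apply Finset.card_le_card
    intro v hv
    rw [Finset.mem_filter] at hv ⊢
    refine ⟨Finset.mem_univ _, ?_⟩
    have := hl1 v
    rw [hv.2] at this
    exact this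
  calc (4:ℝ)^n = ((4^n : ℕ) : ℝ) := by push_cast; ring
    _ ≤ ((∑ c ∈ hCf.toFinset, (Finset.univ.filter (fun v => cov v = c)).card : ℕ) : ℝ) := by
        exact_mod_cast hcount
    _ = ∑ c ∈ hCf.toFinset, ((Finset.univ.filter (fun v => cov v = c)).card : ℝ) := by
        push_cast; rfl
    _ ≤ ∑ _c ∈ hCf.toFinset, (65/18 : ℝ) ^ n := Finset.sum_le_sum fun c _ => hball c
    _ = hCf.toFinset.card * (65/18) ^ n := by rw [Finset.sum_const, nsmul_eq_mul]

lemma exists_finite_cover {D : Set (X → ℝ)} (hDne : D.Nonempty) (hD : ∀ d ∈ D, Dist1 d)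
    {ε : ℝ} (hε : 0 < ε) {n : ℕ} (hn : 0 < n) {x : Fin n → X} (hinj : Function.Injective x)
    (hne : (Finset.image x Finset.univ).Nonempty) :
    ∃ C : Finset (X → ℝ),
      IsCover (PMF.uniformOfFinset (Finset.image x Finset.univ) hne) D (allPred X) ε ↑C := by
  classical
  set m : ℕ := max 1 ⌈1/ε⌉₊ with hm
  have hm0 : 0 < m := lt_of_lt_of_le one_pos (le_max_left _ _)
  have hmpos : (0:ℝ) < m := by exact_mod_cast hm0
  have hminv : 1 / (m:ℝ) ≤ ε := by
    rw [div_le_iff₀ hmpos]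
    have h1 : 1/ε ≤ (⌈1/ε⌉₊ : ℝ) := Nat.le_ceil _
    have h2 : ((⌈1/ε⌉₊ : ℕ) : ℝ) ≤ (m:ℝ) := by exact_mod_cast le_max_right 1 ⌈1/ε⌉₊
    have h3 : 1/ε ≤ (m:ℝ) := le_trans h1 h2
    calc (1:ℝ) = ε * (1/ε) := by field_simp
      _ ≤ ε * m := mul_le_mul_of_nonneg_left h3 hε.le
  refine ⟨Finset.image (gridFn x m) Finset.univ, ?_, ?_⟩
  · rintro c hc
    simp only [Finset.coe_image, Set.mem_image] at hc
    obtain ⟨v, _, rfl⟩ := hc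
    exact gridFn_mem_allPred x hm0 v
  · intro p hp
    have hvlt : ∀ i : Fin n, ⌊p (x i) * m⌋₊ < m + 1 := by
      intro i
      have h1 : p (x i) * m ≤ (m:ℝ) := by nlinarith [(hp (x i)).2, hmpos.le]
      have h2 : ⌊p (x i) * m⌋₊ ≤ ⌊(m:ℝ)⌋₊ := Nat.floor_le_floor h1
      rw [Nat.floor_natCast] at h2
      exact Nat.lt_succ_of_le h2
    set v : Fin n → Fin (m+1) := fun i => ⟨⌊p (x i) * m⌋₊, hvlt i⟩ with hvdef
    refine ⟨gridFn x m v, Finset.mem_coe.2 (Finset.mem_image_of_mem _ (Finset.mem_univ v)), ?_⟩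
    refine le_trans (dnorm_le hinj hne hD _) ?_
    have hterm : ∀ i : Fin n, |(p - gridFn x m v) (x i)| ≤ ε := by
      intro i
      rw [Pi.sub_apply, gridFn_apply hinj]
      have hvi : ((v i : ℕ) : ℝ) = ((⌊p (x i) * m⌋₊ : ℕ) : ℝ) := rfl
      rw [hvi]
      have h0 : (0:ℝ) ≤ p (x i) := (hp (x i)).1
      have hfl : ((⌊p (x i) * m⌋₊ : ℕ) : ℝ) ≤ p (x i) * m := Nat.floor_le (by positivity)
      have hfl2 : p (x i) * m < ((⌊p (x i) * m⌋₊ : ℕ) : ℝ) + 1 := Nat.lt_floor_add_one _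
      have hle : ((⌊p (x i) * m⌋₊ : ℕ) : ℝ) / m ≤ p (x i) := by
        rw [div_le_iff₀ hmpos]; linarith
      have hup : p (x i) ≤ (((⌊p (x i) * m⌋₊ : ℕ) : ℝ) + 1) / m := by
        rw [le_div_iff₀ hmpos]; linarith
      have hid : (((⌊p (x i) * m⌋₊ : ℕ) : ℝ) + 1) / m - ((⌊p (x i) * m⌋₊ : ℕ) : ℝ) / m
          = 1 / m := by ring
      rw [abs_of_nonneg (by linarith)]
      linarith
    have hsum : ∑ i : Fin n, |(p - gridFn x m v) (x i)| ≤ (n : ℝ) * ε := by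
      calc ∑ i : Fin n, |(p - gridFn x m v) (x i)| ≤ ∑ _i : Fin n, ε :=
            Finset.sum_le_sum fun i _ => hterm i
        _ = (n : ℝ) * ε := by rw [Finset.sum_const, Finset.card_univ, Fintype.card_fin,
              nsmul_eq_mul]
    rcases Nat.eq_zero_or_pos n with h0 | h0
    · subst h0; simpa using hε.le
    have hn : (0:ℝ) < n := by exact_mod_cast h0
    calc (∑ i : Fin n, |(p - gridFn x m v) (x i)|) / n ≤ ((n:ℝ) * ε) / n := by gcongr
      _ = ε := by field_simp

end Aux


/-- if `x₁,…,x_n` are `6ε`-fat shattered by `D` and `μ` is uniform over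
`{x₁,…,x_n}`, then `log N_{μ,D}([0,1]^X, ε) ≥ n/8`. -/
theorem statement_12 {X : Type} [Nonempty X] [DecidableEq X] (D : Set (X → ℝ))
    (hDne : D.Nonempty) (hD : ∀ d ∈ D, Dist1 d) (ε : ℝ) (hε : 0 < ε)
    (n : ℕ) (hn : 0 < n) (x : Fin n → X) (hx : Shatters D (6 * ε) x) :
    (n : ℝ) / 8 ≤
      elog2 (covN (PMF.uniformOfFinset (Finset.image x Finset.univ)
          ⟨x ⟨0, hn⟩, Finset.mem_image_of_mem x (Finset.mem_univ _)⟩)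
        D (allPred X) ε) := by
  classical
  have hinj : Function.Injective x := shatters_inj (by positivity) hx
  set hne : (Finset.image x Finset.univ).Nonempty :=
    ⟨x ⟨0, hn⟩, Finset.mem_image_of_mem x (Finset.mem_univ _)⟩ with hhne
  set μ := PMF.uniformOfFinset (Finset.image x Finset.univ) hne with hμ
  set K := covN μ D (allPred X) ε with hK
  set m₀ : ℕ := ⌈(72/65 : ℝ) ^ n⌉₊ with hm₀
  have hlow : ∀ C : Set (X → ℝ), IsCover μ D (allPred X) ε C → (m₀ : ℕ∞) ≤ C.encard := by
    intro C hC
    rcases Set.finite_or_infinite C with hf | hf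
    · rw [Set.Finite.encard_eq_coe_toFinset_card hf]
      have hcard := cover_card_lb hDne hD hε hx hinj hne hf hC
      have h65 : (0:ℝ) < (65/18 : ℝ) ^ n := by positivity
      have hmul : (72/65 : ℝ) ^ n * (65/18 : ℝ) ^ n = (4:ℝ) ^ n := by
        rw [← mul_pow]; norm_num
      rw [← hmul] at hcard
      have hle : (72/65 : ℝ) ^ n ≤ (hf.toFinset.card : ℝ) :=
        le_of_mul_le_mul_right hcard h65
      have : m₀ ≤ hf.toFinset.card := Nat.ceil_le.2 hle
      exact_mod_cast this
    · rw [Set.Infinite.encard_eq hf]; exact le_top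
  have hK1 : (m₀ : ℕ∞) ≤ K := le_iInf fun C => le_iInf fun hC => hlow C hC
  obtain ⟨C₀, hC₀⟩ := exists_finite_cover hDne hD hε hn hinj hne
  have hK2 : K ≤ (C₀.card : ℕ∞) := by
    have h := iInf₂_le (f := fun (C : Set (X → ℝ)) (_ : IsCover μ D (allPred X) ε C) => C.encard)
      (↑C₀ : Set (X → ℝ)) hC₀
    rwa [Set.encard_coe_eq_coe_finsetCard] at h
  have hKne : K ≠ ⊤ := (lt_of_le_of_lt hK2 (WithTop.coe_lt_top _)).ne
  have hm₀K : m₀ ≤ K.toNat := by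
    have h := hK1
    rw [← ENat.coe_toNat hKne] at h
    exact_mod_cast h
  have hb : (2:ℝ) ^ ((1:ℝ)/8) ≤ 72/65 := by
    have h8 : ((2:ℝ) ^ ((1:ℝ)/8)) ^ (8:ℕ) = 2 := by
      rw [← Real.rpow_natCast ((2:ℝ) ^ ((1:ℝ)/8)) 8, ← Real.rpow_mul (by norm_num : (0:ℝ) ≤ 2)]
      norm_num
    by_contra hlt
    push_neg at hlt
    have hc := pow_lt_pow_left₀ hlt (by norm_num : (0:ℝ) ≤ 72/65) (by norm_num : 8 ≠ 0)
    rw [h8] at hc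
    norm_num at hc
  have hpow : (2:ℝ) ^ ((n:ℝ)/8) ≤ (K.toNat : ℝ) := by
    have hpos : (0:ℝ) ≤ (2:ℝ) ^ ((1:ℝ)/8) := (Real.rpow_pos_of_pos two_pos _).le
    calc (2:ℝ) ^ ((n:ℝ)/8) = ((2:ℝ) ^ ((1:ℝ)/8)) ^ (n:ℕ) := by
          rw [← Real.rpow_natCast ((2:ℝ) ^ ((1:ℝ)/8)) n, ← Real.rpow_mul (by norm_num : (0:ℝ) ≤ 2)]
          congr 1
          ring
      _ ≤ (72/65 : ℝ) ^ n := pow_le_pow_left₀ hpos hb n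
      _ ≤ (m₀ : ℝ) := Nat.le_ceil _
      _ ≤ (K.toNat : ℝ) := by exact_mod_cast hm₀K
  have hrpos : (0:ℝ) < (2:ℝ) ^ ((n:ℝ)/8) := Real.rpow_pos_of_pos two_pos _
  unfold elog2
  calc (n:ℝ)/8 = Real.logb 2 ((2:ℝ) ^ ((n:ℝ)/8)) := by
        rw [Real.logb_rpow (by norm_num : (0:ℝ) < 2) (by norm_num : (2:ℝ) ≠ 1)]
    _ ≤ Real.logb 2 ((K.toNat : ℕ) : ℝ) :=
        Real.logb_le_logb_of_le (by norm_num : (1:ℝ) < 2) hrpos hpow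
    _ = Real.logb 2 ((K.toNat : ℕ) : ℝ) := rfl
end
end

section
/- For every distinguisher class D ⊆ [−1,1]^X, every advantage bound ε > 0, and every failure probability bound δ ∈ (0,1), SAMP-DF-R([0,1]^X, D, ε, δ) = SAMP-DF-A([0,1]^X, D, ε, δ) ≥ fat_D(12ε)/8 + log(1−δ). -/
open scoped ENNReal Pointwise

noncomputable section

namespace OI

-- ## probability helpers

lemma prob_eq_tsum {α : Type*} (q : PMF α) (E : Set α) :
    prob q E = ∑' a, E.indicator q a := PMF.toOuterMeasure_apply q E

lemma prob_le_one {α : Type*} (q : PMF α) (E : Set α) : prob q E ≤ 1 := by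
  rw [prob_eq_tsum]
  calc ∑' a, E.indicator (⇑q) a ≤ ∑' a, q a :=
        ENNReal.tsum_le_tsum fun a => Set.indicator_le_self _ _ _
    _ = 1 := q.tsum_coe

lemma prob_bind {α β : Type*} (m : PMF α) (A : α → PMF β) (E : Set β) :
    prob (m.bind A) E = ∑' s, m s * prob (A s) E := by
  classical
  simp only [prob_eq_tsum, PMF.bind_apply]
  calc ∑' p, E.indicator (fun p => ∑' s, m s * (A s) p) p
      = ∑' p, ∑' s, (if p ∈ E then m s * (A s) p else 0) := by
        refine tsum_congr fun p => ?_
        rw [Set.indicator_apply]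
        split <;> simp
    _ = ∑' s, ∑' p, (if p ∈ E then m s * (A s) p else 0) := ENNReal.tsum_comm
    _ = ∑' s, m s * ∑' p, E.indicator (⇑(A s)) p := by
        refine tsum_congr fun s => ?_
        rw [← ENNReal.tsum_mul_left]
        refine tsum_congr fun p => ?_
        rw [Set.indicator_apply]
        split <;> simp

lemma prob_bind_le_scale {α β : Type*} (m m' : PMF α) (A : α → PMF β) (E : Set β) (c : ℝ≥0∞)
    (h : ∀ s, m s ≤ c * m' s) : prob (m.bind A) E ≤ c * prob (m'.bind A) E := by
  rw [prob_bind, prob_bind, ← ENNReal.tsum_mul_left]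
  refine ENNReal.tsum_le_tsum fun s => ?_
  rw [← mul_assoc]
  exact mul_le_mul_left (h s) _

lemma iid_scale {α : Type*} (q q' : PMF α) (c : ℝ≥0∞) (h : ∀ y, q y ≤ c * q' y) :
    ∀ n s, iid q n s ≤ c ^ n * iid q' n s := by
  classical
  intro n
  induction n with
  | zero => intro s; simp only [iid, pow_zero, one_mul]; exact le_rfl
  | succ n ih =>
    intro s
    have step1 : ∀ v, iid q n v * (q.map (fun a => Fin.cons a v)) s
        ≤ (c ^ n * iid q' n v) * (c * (q'.map (fun a => Fin.cons a v)) s) := by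
      intro v
      refine mul_le_mul' (ih v) ?_
      rw [PMF.map_apply, PMF.map_apply, ← ENNReal.tsum_mul_left]
      refine ENNReal.tsum_le_tsum fun a => ?_
      split
      · exact h a
      · simp
    show ((iid q n).bind fun v => q.map fun a => Fin.cons a v) s
        ≤ c ^ (n + 1) * ((iid q' n).bind fun v => q'.map fun a => Fin.cons a v) s
    rw [PMF.bind_apply, PMF.bind_apply, ← ENNReal.tsum_mul_left]
    refine le_trans (ENNReal.tsum_le_tsum step1) (le_of_eq (tsum_congr fun v => by ring))

lemma sum_prob_disjoint {α β : Type*} (q : PMF α) (T : Finset β) (E : β → Set α)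
    (hdisj : ∀ t ∈ T, ∀ t' ∈ T, t ≠ t' → E t ∩ E t' = ∅) :
    ∑ t ∈ T, prob q (E t) ≤ 1 := by
  classical
  simp only [prob_eq_tsum]
  rw [← Summable.tsum_finsetSum (fun i _ => ENNReal.summable)]
  calc ∑' a, ∑ t ∈ T, (E t).indicator (⇑q) a ≤ ∑' a, q a := by
        refine ENNReal.tsum_le_tsum fun a => ?_
        by_cases hex : ∃ t₀ ∈ T, a ∈ E t₀
        · obtain ⟨t₀, ht₀, ha⟩ := hex
          rw [Finset.sum_eq_single_of_mem t₀ ht₀]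
          · exact Set.indicator_le_self _ _ _
          · intro t ht hne
            rw [Set.indicator_apply_eq_zero]
            intro ha'
            exact (Set.eq_empty_iff_forall_notMem.mp (hdisj t ht t₀ ht₀ hne) a ⟨ha', ha⟩).elim
        · push_neg at hex
          rw [Finset.sum_eq_zero fun t ht => Set.indicator_apply_eq_zero.mpr fun ha => absurd ha (hex t ht)]
          exact zero_le
    _ = 1 := q.tsum_coe

-- ## exDist / bern

lemma bern_apply_of_mem (r : ℝ) (hr0 : 0 ≤ r) (hr1 : r ≤ 1) (o : Bool) :
    bern r o = if o then ENNReal.ofReal r else ENNReal.ofReal (1 - r) := by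
  have hmin : min (Real.toNNReal r) 1 = Real.toNNReal r := by
    rw [min_eq_left]
    exact Real.toNNReal_le_one.mpr hr1
  rw [bern, PMF.bernoulli_apply, hmin]
  cases o
  · simp only [cond_false, if_neg Bool.false_ne_true]
    rw [ENNReal.ofReal_sub _ hr0, ENNReal.ofReal_one]
    rfl
  · simp
    rfl

lemma exDist_apply {X : Type*} (μ : PMF X) (p : X → ℝ) (y : X) (o : Bool) :
    exDist μ p (y, o) = μ y * bern (p y) o := by
  classical
  rw [exDist, PMF.bind_apply]
  have hmap : ∀ x' : X, ((bern (p x')).map fun o => (x', o)) (y, o)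
      = if y = x' then bern (p x') o else 0 := by
    intro x'
    rw [PMF.map_apply]
    by_cases hxy : y = x'
    · subst hxy
      rw [if_pos rfl]
      rw [tsum_eq_single o (fun o' ho' => by rw [if_neg (by simp [Ne.symm ho'])])]
      rw [if_pos rfl]
    · rw [if_neg hxy]
      refine ENNReal.summable.tsum_eq_zero_iff |>.mpr fun o' => ?_
      rw [if_neg (by simp [hxy])]
  calc ∑' x', μ x' * ((bern (p x')).map fun o => (x', o)) (y, o)
      = ∑' x', (if y = x' then μ x' * bern (p x') o else 0) := by
        refine tsum_congr fun x' => ?_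
        rw [hmap x']
        split <;> simp
    _ = μ y * bern (p y) o := by
        rw [tsum_eq_single y (fun x' hx' => by rw [if_neg (Ne.symm hx')])]
        rw [if_pos rfl]

-- ## combinatorics

open Finset in
lemma card_ball_le (k R : ℕ) (t : Fin k → Bool) :
    #(univ.filter fun b : Fin k → Bool => hammingDist t b ≤ R)
      ≤ ∑ j ∈ range (R + 1), k.choose j := by
  classical
  have h := Finset.card_le_card_of_injOn
    (s := univ.filter fun b : Fin k → Bool => hammingDist t b ≤ R)
    (t := (range (R + 1)).biUnion fun j => powersetCard j univ)
    (fun b : Fin k → Bool => univ.filter fun i => t i ≠ b i) ?_ ?_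
  · refine h.trans ?_
    refine (Finset.card_biUnion_le).trans ?_
    refine Finset.sum_le_sum fun j _ => ?_
    rw [Finset.card_powersetCard, Finset.card_univ, Fintype.card_fin]
  · intro b hb
    rw [Finset.mem_coe, Finset.mem_filter] at hb
    rw [Finset.mem_coe, Finset.mem_biUnion]
    refine ⟨hammingDist t b, ?_, ?_⟩
    · rw [Finset.mem_range]; omega
    · rw [Finset.mem_powersetCard]
      exact ⟨Finset.subset_univ _, rfl⟩
  · intro b hb b' hb' heq
    funext i
    have hi : (i ∈ univ.filter fun i => t i ≠ b i) ↔ (i ∈ univ.filter fun i => t i ≠ b' i) := by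
      rw [show (univ.filter fun i => t i ≠ b i) = (univ.filter fun i => t i ≠ b' i) from heq]
    simp only [Finset.mem_filter, Finset.mem_univ, true_and] at hi
    cases hbi : b i <;> cases hb'i : b' i <;> cases hti : t i <;> simp_all

open Finset in
lemma gv_packing (k : ℕ) :
    ∃ T : Finset (Fin k → Bool),
      (∀ t ∈ T, ∀ t' ∈ T, t ≠ t' → 5 * k < 18 * hammingDist t t') ∧
      2 ^ k ≤ T.card * ∑ j ∈ range (5 * k / 18 + 1), k.choose j := by
  classical
  set R := 5 * k / 18 with hR
  set P : Finset (Fin k → Bool) → Prop :=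
    fun T => ∀ t ∈ T, ∀ t' ∈ T, t ≠ t' → 5 * k < 18 * hammingDist t t' with hP
  have hdlt : ∀ d : ℕ, ¬ d ≤ R ↔ 5 * k < 18 * d := by
    intro d
    rw [hR, Nat.le_div_iff_mul_le (by norm_num)]
    omega
  set S : Finset (Finset (Fin k → Bool)) := univ.filter fun T => P T with hS
  have hSne : S.Nonempty := ⟨∅, by simp [hS, hP]⟩
  obtain ⟨T, hTS, hTmax⟩ := Finset.exists_max_image S Finset.card hSne
  have hTP : P T := (Finset.mem_filter.mp hTS).2
  refine ⟨T, hTP, ?_⟩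
  have hcover : ∀ b : Fin k → Bool, ∃ t ∈ T, hammingDist t b ≤ R := by
    intro b
    by_contra hc
    push_neg at hc
    have hbT : b ∉ T := fun hbT => by
      have := hc b hbT
      simp [hammingDist_self] at this
    have hins : P (insert b T) := by
      intro t ht t' ht' hne
      rw [Finset.mem_insert] at ht ht'
      rcases ht with rfl | ht <;> rcases ht' with rfl | ht'
      · exact absurd rfl hne
      · rw [hammingDist_comm]
        exact (hdlt _).mp (Nat.not_le.mpr (hc t' ht'))
      · exact (hdlt _).mp (Nat.not_le.mpr (hc t ht))
      · exact hTP t ht t' ht' hne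
    have hmem : insert b T ∈ S := by
      rw [hS, Finset.mem_filter]
      exact ⟨Finset.mem_univ _, hins⟩
    have := hTmax _ hmem
    rw [Finset.card_insert_of_notMem hbT] at this
    omega
  have hsub : (univ : Finset (Fin k → Bool))
      ⊆ T.biUnion fun t => univ.filter fun b => hammingDist t b ≤ R := by
    intro b _
    rw [Finset.mem_biUnion]
    obtain ⟨t, ht, hd⟩ := hcover b
    exact ⟨t, ht, by simp [hd]⟩
  calc 2 ^ k = #(univ : Finset (Fin k → Bool)) := by
        rw [Finset.card_univ, Fintype.card_fun, Fintype.card_bool, Fintype.card_fin]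
    _ ≤ #(T.biUnion fun t => univ.filter fun b => hammingDist t b ≤ R) :=
        Finset.card_le_card hsub
    _ ≤ ∑ t ∈ T, #(univ.filter fun b => hammingDist t b ≤ R) := Finset.card_biUnion_le
    _ ≤ ∑ _t ∈ T, ∑ j ∈ range (R + 1), k.choose j :=
        Finset.sum_le_sum fun t _ => card_ball_le k R t
    _ = T.card * ∑ j ∈ range (R + 1), k.choose j := by rw [Finset.sum_const, smul_eq_mul]

open Finset in
lemma volume_le (k : ℕ) :
    (∑ j ∈ range (5 * k / 18 + 1), (k.choose j : ℝ))
      ≤ (18 / 13 : ℝ) ^ k * (13 / 5 : ℝ) ^ (5 * k / 18) := by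
  set R := 5 * k / 18 with hR
  have hRk : R ≤ k := by
    have := Nat.div_mul_le_self (5 * k) 18
    omega
  have hbin : ∑ m ∈ range (k + 1), (5 / 18 : ℝ) ^ m * (13 / 18 : ℝ) ^ (k - m) * k.choose m = 1 := by
    rw [← add_pow]
    norm_num
  have hterm : ∀ m ∈ range (R + 1),
      (k.choose m : ℝ) * ((13 / 18 : ℝ) ^ k * (5 / 13 : ℝ) ^ R)
        ≤ (5 / 18 : ℝ) ^ m * (13 / 18 : ℝ) ^ (k - m) * k.choose m := by
    intro m hm
    rw [Finset.mem_range] at hm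
    have hmR : m ≤ R := by omega
    have hmk : m ≤ k := le_trans hmR hRk
    have hre : (5 / 18 : ℝ) ^ m * (13 / 18 : ℝ) ^ (k - m)
        = (13 / 18 : ℝ) ^ k * (5 / 13 : ℝ) ^ m := by
      have h1 : (13 / 18 : ℝ) ^ k = (13 / 18 : ℝ) ^ m * (13 / 18 : ℝ) ^ (k - m) := by
        rw [← pow_add]
        congr 1
        omega
      rw [h1]
      have h2 : (5 / 18 : ℝ) ^ m = (13 / 18 : ℝ) ^ m * (5 / 13 : ℝ) ^ m := by
        rw [← mul_pow]
        norm_num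
      rw [h2]
      ring
    rw [hre]
    have hpow : (5 / 13 : ℝ) ^ R ≤ (5 / 13 : ℝ) ^ m :=
      pow_le_pow_of_le_one (by norm_num) (by norm_num) hmR
    have hcn : (0 : ℝ) ≤ k.choose m := Nat.cast_nonneg _
    have hmono : (13 / 18 : ℝ) ^ k * (5 / 13 : ℝ) ^ R ≤ (13 / 18 : ℝ) ^ k * (5 / 13 : ℝ) ^ m :=
      mul_le_mul_of_nonneg_left hpow (pow_nonneg (by norm_num) k)
    refine le_trans (mul_le_mul_of_nonneg_left hmono hcn) (le_of_eq (by ring))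
  have hsum : (∑ j ∈ range (R + 1), (k.choose j : ℝ)) * ((13 / 18 : ℝ) ^ k * (5 / 13 : ℝ) ^ R)
      ≤ 1 := by
    rw [Finset.sum_mul]
    refine le_trans (Finset.sum_le_sum hterm) ?_
    rw [← hbin]
    refine Finset.sum_le_sum_of_subset_of_nonneg ?_ ?_
    · exact Finset.range_subset_range.mpr (by omega)
    · intro m _ _
      positivity
  have hbpos : (0 : ℝ) < (13 / 18 : ℝ) ^ k * (5 / 13 : ℝ) ^ R := by positivity
  rw [← le_div_iff₀ hbpos] at hsum
  refine hsum.trans (le_of_eq ?_)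
  rw [one_div, mul_inv, ← inv_pow, ← inv_pow]
  norm_num

lemma w_pow_le (k : ℕ) :
    ((18 / 13 : ℝ) ^ k * (13 / 5 : ℝ) ^ (5 * k / 18)) ^ 72 ≤ (2 : ℝ) ^ (63 * k) := by
  set R := 5 * k / 18 with hR
  have h72R : 72 * R ≤ 20 * k := by
    have := Nat.div_mul_le_self (5 * k) 18
    have h18R : 18 * R ≤ 5 * k := by
      rw [hR]
      omega
    omega
  rw [mul_pow, ← pow_mul, ← pow_mul]
  have h1 : (13 / 5 : ℝ) ^ (R * 72) ≤ (13 / 5 : ℝ) ^ (20 * k) :=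
    pow_le_pow_right₀ (by norm_num) (by omega)
  have h2 : (18 / 13 : ℝ) ^ (k * 72) * (13 / 5 : ℝ) ^ (20 * k) ≤ (2 : ℝ) ^ (63 * k) := by
    have hbase : (18 / 13 : ℝ) ^ 72 * (13 / 5 : ℝ) ^ 20 ≤ (2 : ℝ) ^ 63 := by
      rw [div_pow, div_pow, div_mul_div_comm, div_le_iff₀ (by positivity)]
      norm_num
    calc (18 / 13 : ℝ) ^ (k * 72) * (13 / 5 : ℝ) ^ (20 * k)
        = ((18 / 13 : ℝ) ^ 72 * (13 / 5 : ℝ) ^ 20) ^ k := by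
          rw [mul_pow, ← pow_mul, ← pow_mul]
          ring_nf
      _ ≤ ((2 : ℝ) ^ 63) ^ k := by
          refine pow_le_pow_left₀ ?_ hbase k
          positivity
      _ = (2 : ℝ) ^ (63 * k) := by rw [← pow_mul, mul_comm]
  calc (18 / 13 : ℝ) ^ (k * 72) * (13 / 5 : ℝ) ^ (R * 72)
      ≤ (18 / 13 : ℝ) ^ (k * 72) * (13 / 5 : ℝ) ^ (20 * k) := by
        refine mul_le_mul_of_nonneg_left h1 (by positivity)
    _ ≤ (2 : ℝ) ^ (63 * k) := h2

-- ## main lower-bound lemma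

open Finset in
lemma main_bound {X : Type} [Nonempty X] (D : Set (X → ℝ)) (hDne : D.Nonempty)
    (hD : ∀ d ∈ D, Dist1 d) (ε δ : ℝ) (hε : 0 < ε) (hδ : δ ∈ Set.Ioo (0 : ℝ) 1)
    (k : ℕ) (hk : 0 < k) (x : Fin k → X) (hsh : Shatters D (12 * ε) x)
    (n : ℕ) (A : Learner X n) (hA : DFRL (allPred X) D ε δ n A) :
    (k : ℝ) / 8 + Real.logb 2 (1 - δ) ≤ (n : ℝ) := by
  classical
  obtain ⟨r, hr⟩ := hsh
  have h1δ : (0 : ℝ) < 1 - δ := by linarith [hδ.2]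
  -- injectivity of x
  have hinj : Function.Injective x := by
    intro i j hij
    by_contra hne
    obtain ⟨f₁, _, hf₁⟩ := hr fun l => decide (l = i)
    obtain ⟨f₂, _, hf₂⟩ := hr fun l => decide (l = j)
    have e1 : f₁ (x i) = f₁ (x j) := congrArg f₁ hij
    have e2 : f₂ (x i) = f₂ (x j) := congrArg f₂ hij
    have h1i := hf₁ i
    have h1j := hf₁ j
    have h2i := hf₂ i
    have h2j := hf₂ j
    rw [if_pos (by simp), one_mul] at h1i
    rw [if_neg (by simp only [decide_eq_true_eq]; exact fun h => hne h.symm), neg_one_mul] at h1j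
    rw [if_neg (by simp only [decide_eq_true_eq]; exact hne), neg_one_mul] at h2i
    rw [if_pos (by simp), one_mul] at h2j
    linarith
  -- the uniform distribution on the shattered points
  set s : Finset X := univ.image x with hs_def
  have hsne : s.Nonempty := ⟨x ⟨0, hk⟩, mem_image_of_mem x (mem_univ _)⟩
  set μ : PMF X := PMF.uniformOfFinset s hsne with hμ
  have hkR : (0 : ℝ) < k := Nat.cast_pos.mpr hk
  have hcards : #s = k := by
    rw [hs_def, Finset.card_image_of_injective _ hinj, card_univ, Fintype.card_fin]
  have hpexp : ∀ h : X → ℝ, pexp μ h = (∑ i, h (x i)) / k := by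
    intro h
    have hzero : ∀ y ∉ s, (μ y).toReal * h y = 0 := by
      intro y hy
      show ((PMF.uniformOfFinset s hsne) y).toReal * h y = 0
      rw [PMF.uniformOfFinset_apply, if_neg hy]
      simp
    have hμval : ∀ y ∈ s, (μ y).toReal * h y = (k : ℝ)⁻¹ * h y := by
      intro y hy
      show ((PMF.uniformOfFinset s hsne) y).toReal * h y = (k : ℝ)⁻¹ * h y
      rw [PMF.uniformOfFinset_apply, if_pos hy, hcards, ENNReal.toReal_inv]
      norm_num
    rw [pexp, tsum_eq_sum (s := s) hzero, Finset.sum_congr rfl hμval, hs_def,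
      Finset.sum_image (fun a _ b _ hab => hinj hab), ← Finset.mul_sum, div_eq_inv_mul]
  have hinn : ∀ f g : X → ℝ, inn μ f g = (∑ i, f (x i) * g (x i)) / k := fun f g => hpexp _
  -- the hard predictors
  set pf : (Fin k → Bool) → X → ℝ :=
    fun t y => if h : ∃ i, x i = y then (if t h.choose then 4/5 else 1/5) else 1/2 with hpf
  have hpf_at : ∀ t i, pf t (x i) = if t i then (4/5 : ℝ) else 1/5 := by
    intro t i
    have hex : ∃ i', x i' = x i := ⟨i, rfl⟩
    have hch : hex.choose = i := hinj hex.choose_spec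
    simp only [hpf, dif_pos hex, hch]
  have hpf_range : ∀ t y, (1/5 : ℝ) ≤ pf t y ∧ pf t y ≤ 4/5 := by
    intro t y
    simp only [hpf]
    split
    · split <;> norm_num
    · norm_num
  have hpf_pred : ∀ t, Predictor (pf t) := by
    intro t y
    obtain ⟨h1, h2⟩ := hpf_range t y
    exact Set.mem_Icc.mpr ⟨by linarith, by linarith⟩
  -- dnorm basics
  have hinn_le : ∀ (f g : X → ℝ) (c : ℝ), (∀ y, |f y| ≤ c) → g ∈ D → |inn μ f g| ≤ c := by
    intro f g c hf hg
    have hgb := hD g hg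
    rw [hinn, abs_div, Nat.abs_cast, div_le_iff₀ hkR]
    calc |∑ i, f (x i) * g (x i)| ≤ ∑ i, |f (x i) * g (x i)| := Finset.abs_sum_le_sum_abs _ _
      _ ≤ ∑ _i : Fin k, c := by
          refine sum_le_sum fun i _ => ?_
          rw [abs_mul]
          have h1 := hf (x i)
          have h2 : |g (x i)| ≤ 1 := abs_le.mpr ⟨(hgb (x i)).1, (hgb (x i)).2⟩
          nlinarith [abs_nonneg (f (x i)), abs_nonneg (g (x i))]
      _ = c * k := by rw [sum_const, card_univ, Fintype.card_fin, nsmul_eq_mul, mul_comm]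
  have hbdd : ∀ f : X → ℝ, (∀ y, |f y| ≤ 1) → BddAbove ((fun g => |inn μ f g|) '' D) :=
    fun f hf => ⟨1, by rintro v ⟨g, hg, rfl⟩; exact hinn_le f g 1 hf hg⟩
  have hle_dnorm : ∀ f : X → ℝ, (∀ y, |f y| ≤ 1) → ∀ g ∈ D, |inn μ f g| ≤ dnorm μ D f :=
    fun f hf g hg => le_csSup (hbdd f hf) ⟨g, hg, rfl⟩
  have hdiff_bd : ∀ p q : X → ℝ, Predictor p → Predictor q → ∀ y, |(p - q) y| ≤ 1 := by
    intro p q hp hq y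
    have h1 := Set.mem_Icc.mp (hp y)
    have h2 := Set.mem_Icc.mp (hq y)
    rw [Pi.sub_apply, abs_le]
    constructor <;> linarith [h1.1, h1.2, h2.1, h2.2]
  -- triangle inequality as needed
  have htri : ∀ (p : X → ℝ) (t t' : Fin k → Bool), Predictor p →
      dnorm μ D (pf t - pf t') ≤ dnorm μ D (p - pf t) + dnorm μ D (p - pf t') := by
    intro p t t' hp
    refine csSup_le (hDne.image _) ?_
    rintro v ⟨g, hg, rfl⟩
    show |inn μ (pf t - pf t') g| ≤ dnorm μ D (p - pf t) + dnorm μ D (p - pf t')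
    have heq : inn μ (pf t - pf t') g = inn μ (p - pf t') g - inn μ (p - pf t) g := by
      rw [hinn, hinn, hinn, ← sub_div, ← Finset.sum_sub_distrib]
      congr 1
      refine Finset.sum_congr rfl fun i _ => ?_
      simp only [Pi.sub_apply]
      ring
    rw [heq]
    refine (abs_sub _ _).trans ?_
    rw [add_comm]
    exact add_le_add (hle_dnorm _ (hdiff_bd p (pf t) hp (hpf_pred t)) g hg)
      (hle_dnorm _ (hdiff_bd p (pf t') hp (hpf_pred t')) g hg)
  -- separation
  have hsep : ∀ t t' : Fin k → Bool,
      (72/5) * ε * (hammingDist t t' : ℝ) / k ≤ 2 * dnorm μ D (pf t - pf t') := by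
    intro t t'
    obtain ⟨dt, hdtD, hdt⟩ := hr t
    obtain ⟨dt', hdt'D, hdt'⟩ := hr t'
    have hfb : ∀ y, |(pf t - pf t') y| ≤ 1 := hdiff_bd _ _ (hpf_pred t) (hpf_pred t')
    have hkey : (72/5) * ε * (hammingDist t t' : ℝ) / k
        ≤ inn μ (pf t - pf t') dt - inn μ (pf t - pf t') dt' := by
      rw [hinn, hinn, ← sub_div]
      rw [div_le_div_iff_of_pos_right hkR]
      rw [← Finset.sum_sub_distrib]
      have hterm : ∀ i : Fin k, (if t i = t' i then (0:ℝ) else (72/5) * ε)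
          ≤ (pf t - pf t') (x i) * dt (x i) - (pf t - pf t') (x i) * dt' (x i) := by
        intro i
        by_cases hi : t i = t' i
        · rw [if_pos hi]
          simp only [Pi.sub_apply, hpf_at, hi]
          ring_nf
          exact le_refl _
        · rw [if_neg hi]
          have h1 := hdt i
          have h2 := hdt' i
          cases htb : t i
          · have ht'b : t' i = true := by
              cases ht'b : t' i
              · exact absurd (htb.trans ht'b.symm) hi
              · rfl
            rw [htb] at h1
            rw [ht'b] at h2
            rw [if_neg (by simp), neg_mul, one_mul] at h1
            rw [if_pos rfl, one_mul] at h2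
            have hfx : (pf t - pf t') (x i) = -(3/5 : ℝ) := by
              simp only [Pi.sub_apply, hpf_at, htb, ht'b]
              norm_num
            rw [hfx]
            nlinarith
          · have ht'b : t' i = false := by
              cases ht'b : t' i
              · rfl
              · exact absurd (htb.trans ht'b.symm) hi
            rw [htb] at h1
            rw [ht'b] at h2
            rw [if_pos rfl, one_mul] at h1
            rw [if_neg (by simp), neg_mul, one_mul] at h2
            have hfx : (pf t - pf t') (x i) = (3/5 : ℝ) := by
              simp only [Pi.sub_apply, hpf_at, htb, ht'b]
              norm_num
            rw [hfx]
            nlinarith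
      calc (72/5) * ε * (hammingDist t t' : ℝ)
          = ∑ i : Fin k, (if t i = t' i then (0:ℝ) else (72/5) * ε) := by
            rw [Finset.sum_ite, Finset.sum_const_zero, Finset.sum_const, zero_add,
              nsmul_eq_mul]
            have hdc : hammingDist t t' = #(univ.filter fun i => ¬ (t i = t' i)) := rfl
            rw [hdc]
            ring
        _ ≤ _ := Finset.sum_le_sum fun i _ => hterm i
    have hd1 := hle_dnorm _ hfb dt hdtD
    have hd2 := hle_dnorm _ hfb dt' hdt'D
    calc (72/5) * ε * (hammingDist t t' : ℝ) / k
        ≤ inn μ (pf t - pf t') dt - inn μ (pf t - pf t') dt' := hkey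
      _ ≤ |inn μ (pf t - pf t') dt| + |inn μ (pf t - pf t') dt'| := by
          have := le_abs_self (inn μ (pf t - pf t') dt)
          have := neg_abs_le (inn μ (pf t - pf t') dt')
          linarith
      _ ≤ dnorm μ D (pf t - pf t') + dnorm μ D (pf t - pf t') := add_le_add hd1 hd2
      _ = 2 * dnorm μ D (pf t - pf t') := by ring
  -- the success events
  set E : (Fin k → Bool) → Set (X → ℝ) :=
    fun t => {p | Predictor p ∧ dnorm μ D (p - pf t) ≤ ε} with hE
  -- disjointness
  have hdisj : ∀ t t' : Fin k → Bool, 5 * k < 18 * hammingDist t t' → E t ∩ E t' = ∅ := by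
    intro t t' hlt
    rw [Set.eq_empty_iff_forall_notMem]
    rintro p ⟨⟨hp, hp1⟩, _, hp2⟩
    have ht := htri p t t' hp
    have hs2 := hsep t t'
    have hdist : (18 : ℝ) * (hammingDist t t' : ℝ) ≤ 5 * k := by
      have h3 : (72/5) * ε * (hammingDist t t' : ℝ) / k ≤ 4 * ε := by linarith
      rw [div_le_iff₀ hkR] at h3
      nlinarith
    have hlt' : (5 * k : ℝ) < 18 * (hammingDist t t' : ℝ) := by exact_mod_cast hlt
    linarith
  -- likelihood-ratio bound
  set half : X → ℝ := fun _ => 1/2 with hhalf_def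
  have hconst : (8/5 : ℝ≥0∞) * ENNReal.ofReal (1/2) = ENNReal.ofReal (4/5) := by
    rw [show (8/5 : ℝ≥0∞) = ENNReal.ofReal (8/5) by
      rw [ENNReal.ofReal_div_of_pos (by norm_num)]
      norm_num]
    rw [← ENNReal.ofReal_mul (by norm_num)]
    norm_num
  have hratio : ∀ (t : Fin k → Bool) (z : X × Bool),
      exDist μ (pf t) z ≤ (8/5 : ℝ≥0∞) * exDist μ half z := by
    intro t z
    obtain ⟨y, o⟩ := z
    rw [exDist_apply, exDist_apply]
    have hhalf : bern (half y) o = ENNReal.ofReal (1/2) := by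
      rw [hhalf_def, bern_apply_of_mem _ (by norm_num) (by norm_num)]
      cases o <;> norm_num
    obtain ⟨hl, hu⟩ := hpf_range t y
    have hb : bern (pf t y) o ≤ ENNReal.ofReal (4/5) := by
      rw [bern_apply_of_mem _ (by linarith) (by linarith)]
      cases o
      · rw [if_neg (by simp)]
        exact ENNReal.ofReal_le_ofReal (by linarith)
      · rw [if_pos rfl]
        exact ENNReal.ofReal_le_ofReal hu
    calc μ y * bern (pf t y) o ≤ μ y * ENNReal.ofReal (4/5) := mul_le_mul_right hb _
      _ = (8/5 : ℝ≥0∞) * (μ y * ENNReal.ofReal (1/2)) := by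
          rw [← hconst]
          ring
      _ = (8/5 : ℝ≥0∞) * (μ y * bern (half y) o) := by rw [hhalf]
  -- each target must succeed
  have hach : ∀ t : Fin k → Bool,
      ENNReal.ofReal (1 - δ) ≤ prob (outDist μ (pf t) A) (E t) := by
    intro t
    exact hA μ (pf t) (hpf_pred t)
  -- the packing
  obtain ⟨T, hTfar, hTcard⟩ := gv_packing k
  -- counting
  have hsum : (T.card : ℝ≥0∞) * ENNReal.ofReal (1 - δ) ≤ (8/5 : ℝ≥0∞) ^ n := by
    calc (T.card : ℝ≥0∞) * ENNReal.ofReal (1 - δ)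
        = ∑ _t ∈ T, ENNReal.ofReal (1 - δ) := by rw [sum_const, nsmul_eq_mul]
      _ ≤ ∑ t ∈ T, prob (outDist μ (pf t) A) (E t) := Finset.sum_le_sum fun t _ => hach t
      _ ≤ ∑ t ∈ T, (8/5 : ℝ≥0∞) ^ n * prob ((iid (exDist μ half) n).bind A) (E t) := by
          refine Finset.sum_le_sum fun t _ => ?_
          exact prob_bind_le_scale _ _ _ _ _ fun v => iid_scale _ _ _ (hratio t) n v
      _ = (8/5 : ℝ≥0∞) ^ n * ∑ t ∈ T, prob ((iid (exDist μ half) n).bind A) (E t) := by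
          rw [Finset.mul_sum]
      _ ≤ (8/5 : ℝ≥0∞) ^ n * 1 := by
          refine mul_le_mul_right ?_ _
          exact sum_prob_disjoint _ T E fun t ht t' ht' hne =>
            hdisj t t' (hTfar t ht t' ht' hne)
      _ = (8/5 : ℝ≥0∞) ^ n := mul_one _
  -- to the reals
  have hreal : (T.card : ℝ) * (1 - δ) ≤ (8/5 : ℝ) ^ n := by
    have hfin : ((8/5 : ℝ≥0∞) ^ n) ≠ ⊤ := by
      refine ENNReal.pow_ne_top ?_
      simp [ENNReal.div_eq_top]
    have h1 := ENNReal.toReal_mono hfin hsum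
    rw [ENNReal.toReal_mul, ENNReal.toReal_ofReal h1δ.le, ENNReal.toReal_pow,
      ENNReal.toReal_div, show ((T.card : ℝ≥0∞)).toReal = (T.card : ℝ) from rfl] at h1
    norm_num at h1
    convert h1 using 2 <;> norm_num
  -- final arithmetic
  set R := 5 * k / 18 with hRdef
  set V : ℕ := ∑ j ∈ range (R + 1), k.choose j with hVdef
  set W : ℝ := (18/13 : ℝ) ^ k * (13/5 : ℝ) ^ R with hWdef
  have hTV : (2 : ℝ) ^ k ≤ (T.card : ℝ) * (V : ℝ) := by exact_mod_cast hTcard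
  have hVW : (V : ℝ) ≤ W := by
    rw [hVdef]
    push_cast
    exact volume_le k
  have hWpos : (0 : ℝ) < W := by rw [hWdef]; positivity
  have hVnn : (0 : ℝ) ≤ V := Nat.cast_nonneg _
  have h85 : (8/5 : ℝ) ^ n ≤ (2 : ℝ) ^ n := pow_le_pow_left₀ (by norm_num) (by norm_num) n
  have hchain : (1 - δ) * 2 ^ k ≤ 2 ^ n * W := by
    calc (1 - δ) * 2 ^ k ≤ (1 - δ) * ((T.card : ℝ) * V) :=
          mul_le_mul_of_nonneg_left hTV h1δ.le
      _ = ((T.card : ℝ) * (1 - δ)) * V := by ring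
      _ ≤ (8/5 : ℝ) ^ n * V := mul_le_mul_of_nonneg_right hreal hVnn
      _ ≤ (2 : ℝ) ^ n * V := mul_le_mul_of_nonneg_right h85 hVnn
      _ ≤ (2 : ℝ) ^ n * W := mul_le_mul_of_nonneg_left hVW (by positivity)
  have hlogW : Real.logb 2 W ≤ 63 * k / 72 := by
    have hwp := w_pow_le k
    rw [← hRdef, ← hWdef] at hwp
    have h2 := (Real.logb_le_logb (by norm_num : (1:ℝ) < 2) (by positivity)
      (by positivity)).mpr hwp
    rw [Real.logb_pow, Real.logb_pow, Real.logb_self_eq_one (by norm_num) ] at h2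
    · push_cast at h2
      linarith
  have hlog := (Real.logb_le_logb (by norm_num : (1:ℝ) < 2) (by positivity)
    (by positivity)).mpr hchain
  rw [Real.logb_mul (ne_of_gt h1δ) (by positivity),
    Real.logb_mul (by positivity) (ne_of_gt hWpos), Real.logb_pow, Real.logb_pow,
    Real.logb_self_eq_one (by norm_num)] at hlog
  push_cast at hlog
  linarith


end OI

open OI

/-- sample complexity lower bound for distribution-free OI with `P = [0,1]^X`:
`SAMP-DF-R = SAMP-DF-A ≥ fat_D(12ε)/8 + log(1−δ)`, phrased via any `12ε`-fat-shattered tuple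
and any distribution-free realizable learner. -/
theorem statement_13 {X : Type} [Nonempty X] (D : Set (X → ℝ))
    (hDne : D.Nonempty) (hD : ∀ d ∈ D, Dist1 d)
    (ε δ : ℝ) (hε : 0 < ε) (hδ : δ ∈ Set.Ioo (0 : ℝ) 1) :
    SAMPDFR (allPred X) D ε δ = SAMPDFA (allPred X) D ε δ ∧
      ∀ (k : ℕ) (x : Fin k → X), Shatters D (12 * ε) x →
        ∀ (n : ℕ) (A : Learner X n), DFRL (allPred X) D ε δ n A →
          (k : ℝ) / 8 + Real.logb 2 (1 - δ) ≤ (n : ℝ) := by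
  constructor
  · -- equality of realizable and agnostic sample complexity
    have hag : ∀ (μ : PMF X) (pstar : X → ℝ), Predictor pstar →
        agTarget μ (allPred X) D pstar = 0 := by
      intro μ pstar hp
      have hinn0 : ∀ g : X → ℝ, inn μ (pstar - pstar) g = 0 := by
        intro g
        rw [inn]
        have hfun : (fun x => (pstar - pstar) x * g x) = fun _ => (0 : ℝ) := by
          funext y
          simp
        rw [hfun, pexp]
        simp
      have hdz : dnorm μ D (pstar - pstar) = 0 := by
        rw [dnorm]
        rw [show (fun g => |inn μ (pstar - pstar) g|) = fun _ : X → ℝ => (0 : ℝ) from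
          funext fun g => by rw [hinn0 g, abs_zero]]
        rw [Set.Nonempty.image_const hDne 0, csSup_singleton]
      have hmem : (0 : ℝ) ∈ (fun p' => dnorm μ D (p' - pstar)) '' allPred X :=
        ⟨pstar, hp, hdz⟩
      have hlb : ∀ v ∈ (fun p' => dnorm μ D (p' - pstar)) '' allPred X, (0 : ℝ) ≤ v := by
        rintro v ⟨p', _, rfl⟩
        exact Real.sSup_nonneg fun w hw => by
          obtain ⟨g, _, rfl⟩ := hw
          exact abs_nonneg _
      exact le_antisymm (csInf_le ⟨0, hlb⟩ hmem) (le_csInf ⟨0, hmem⟩ hlb)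
    have key : ∀ n : ℕ, (∃ A : Learner X n, DFRL (allPred X) D ε δ n A)
        = (∃ A : Learner X n, DFAL (allPred X) D ε δ n A) := by
      intro n
      refine propext (exists_congr fun A => ?_)
      constructor
      · intro h μ pstar hp
        unfold AchievesAg
        rw [hag μ pstar hp, zero_add]
        exact h μ pstar hp
      · intro h μ pstar hp
        have h2 := h μ pstar hp
        unfold AchievesAg at h2
        rw [hag μ pstar hp, zero_add] at h2
        exact h2
    rw [SAMPDFR, SAMPDFA]
    exact iInf_congr fun n => by rw [key n]
  · intro k x hsh n A hA
    rcases Nat.eq_zero_or_pos k with rfl | hk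
    · have hlb : Real.logb 2 (1 - δ) ≤ 0 :=
        Real.logb_nonpos (by norm_num) (by linarith [hδ.2]) (by linarith [hδ.1])
      norm_num
      exact hlb.trans (Nat.cast_nonneg n)
    · exact main_bound D hDne hD ε δ hε hδ k hk x hsh n A hA
end
end

section
/- For every predictor class P ⊆ [0,1]^X, every distinguisher class D ⊆ [−1,1]^X, every distribution μ over X, every advantage bound ε > 0, and every failure probability bound δ ∈ (0,1), there exist a nonnegative integer n with n = O( ε^{−2} ( log N_{μ,P}(D, ε/4) + log(2/δ) ) ) and an n-sample learner A such that for every target predictor p* in the symmetric convex hull of P, given n i.i.d. examples from μ_{p*}, A outputs a predictor p with ‖p − p*‖_{μ,D} ≤ ε with probability at least 1 − δ. -/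
open scoped ENNReal Pointwise

noncomputable section

namespace OI

namespace Aux

variable {α : Type*} {β : Type*} {X : Type*}

lemma summable_coe (q : PMF α) : Summable (fun a => (q a).toReal) :=
  ENNReal.summable_toReal q.tsum_coe_ne_top

lemma tsum_coe_real (q : PMF α) : ∑' a, (q a).toReal = 1 := by
  rw [← ENNReal.tsum_toReal_eq (fun a => q.apply_ne_top a), q.tsum_coe, ENNReal.toReal_one]

lemma summable_pexp (q : PMF α) {f : α → ℝ} {B : ℝ}
    (hf : ∀ a, |f a| ≤ B) : Summable (fun a => (q a).toReal * f a) := by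
  rw [← summable_abs_iff]
  refine Summable.of_nonneg_of_le (fun a => abs_nonneg _) (fun a => ?_)
    (((summable_coe q).mul_left B))
  rw [abs_mul, abs_of_nonneg (ENNReal.toReal_nonneg)]
  have := hf a
  have h0 : (0:ℝ) ≤ (q a).toReal := ENNReal.toReal_nonneg
  nlinarith [abs_nonneg (f a)]

lemma pexp_const (q : PMF α) (c : ℝ) : pexp q (fun _ => c) = c := by
  unfold pexp
  rw [show (fun a => (q a).toReal * c) = (fun a => c * (q a).toReal) by funext a; ring,
    tsum_mul_left, tsum_coe_real, mul_one]

lemma pexp_add (q : PMF α) {f g : α → ℝ} {B C : ℝ}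
    (hf : ∀ a, |f a| ≤ B) (hg : ∀ a, |g a| ≤ C) :
    pexp q (fun a => f a + g a) = pexp q f + pexp q g := by
  unfold pexp
  rw [← Summable.tsum_add (summable_pexp q hf) (summable_pexp q hg)]
  congr 1; funext a; ring

lemma pexp_smul (q : PMF α) (c : ℝ) (f : α → ℝ) :
    pexp q (fun a => c * f a) = c * pexp q f := by
  unfold pexp
  rw [← tsum_mul_left]
  congr 1; funext a; ring

lemma pexp_mono (q : PMF α) {f g : α → ℝ} {B C : ℝ}
    (hf : ∀ a, |f a| ≤ B) (hg : ∀ a, |g a| ≤ C) (h : ∀ a, f a ≤ g a) :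
    pexp q f ≤ pexp q g := by
  refine Summable.tsum_le_tsum (fun a => ?_) (summable_pexp q hf) (summable_pexp q hg)
  exact mul_le_mul_of_nonneg_left (h a) ENNReal.toReal_nonneg

lemma pexp_nonneg (q : PMF α) {f : α → ℝ} (h : ∀ a, 0 ≤ f a) : 0 ≤ pexp q f :=
  tsum_nonneg (fun a => mul_nonneg ENNReal.toReal_nonneg (h a))

lemma pexp_abs_le (q : PMF α) {f : α → ℝ} {B : ℝ} (hB : 0 ≤ B) (hf : ∀ a, |f a| ≤ B) :
    |pexp q f| ≤ B := by
  have hcB : ∀ a : α, |(fun _ : α => B) a| ≤ B := fun a => by simp [abs_of_nonneg hB]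
  have hcB' : ∀ a : α, |(fun _ : α => -B) a| ≤ B := fun a => by simp [abs_of_nonneg hB, abs_neg]
  rw [abs_le]
  constructor
  · have := pexp_mono q hcB' hf (fun a => (abs_le.mp (hf a)).1)
    rwa [pexp_const] at this
  · have := pexp_mono q hf hcB (fun a => (abs_le.mp (hf a)).2)
    rwa [pexp_const] at this


lemma etsum_ne_top (q : PMF α) {f : α → ℝ} {B : ℝ} (hub : ∀ a, f a ≤ B) :
    ∑' a, q a * ENNReal.ofReal (f a) ≠ ⊤ := by
  have h : ∑' a, q a * ENNReal.ofReal (f a) ≤ ∑' a, q a * ENNReal.ofReal B :=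
    ENNReal.tsum_le_tsum (fun a => mul_le_mul_right (ENNReal.ofReal_le_ofReal (hub a)) _)
  rw [ENNReal.tsum_mul_right, q.tsum_coe, one_mul] at h
  exact ne_top_of_le_ne_top ENNReal.ofReal_ne_top h

lemma pexp_eq_toReal (q : PMF α) {f : α → ℝ} (h0 : ∀ a, 0 ≤ f a) :
    pexp q f = (∑' a, q a * ENNReal.ofReal (f a)).toReal := by
  rw [ENNReal.tsum_toReal_eq (fun a => ENNReal.mul_ne_top (q.apply_ne_top a) ENNReal.ofReal_ne_top)]
  unfold pexp
  congr 1; funext a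
  rw [ENNReal.toReal_mul, ENNReal.toReal_ofReal (h0 a)]

lemma pexp_bind_nonneg (p : PMF α) (k : α → PMF β) {f : β → ℝ} {B : ℝ}
    (h0 : ∀ b, 0 ≤ f b) (hub : ∀ b, f b ≤ B) :
    pexp (p.bind k) f = pexp p fun a => pexp (k a) f := by
  have hT : ∀ a, (∑' b, k a b * ENNReal.ofReal (f b)) ≠ ⊤ := fun a => etsum_ne_top (k a) hub
  have hg0 : ∀ a, 0 ≤ pexp (k a) f := fun a => by
    rw [pexp_eq_toReal (k a) h0]; exact ENNReal.toReal_nonneg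
  rw [pexp_eq_toReal (p.bind k) h0, pexp_eq_toReal p hg0]
  congr 1
  have hrw : ∀ a, ENNReal.ofReal (pexp (k a) f) = ∑' b, k a b * ENNReal.ofReal (f b) := by
    intro a
    rw [pexp_eq_toReal (k a) h0, ENNReal.ofReal_toReal (hT a)]
  simp_rw [hrw, PMF.bind_apply]
  have L : ∀ b, (∑' a, p a * k a b) * ENNReal.ofReal (f b)
      = ∑' a, p a * (k a b * ENNReal.ofReal (f b)) := by
    intro b
    rw [← ENNReal.tsum_mul_right]
    congr 1; funext a; rw [mul_assoc]
  rw [tsum_congr L, ENNReal.tsum_comm]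
  exact tsum_congr fun a => ENNReal.tsum_mul_left

lemma pexp_bind (p : PMF α) (k : α → PMF β) {f : β → ℝ} {B : ℝ}
    (hf : ∀ b, |f b| ≤ B) :
    pexp (p.bind k) f = pexp p fun a => pexp (k a) f := by
  have hf' : ∀ b, |f b| ≤ |B| := fun b => (hf b).trans (le_abs_self B)
  have hB : (0:ℝ) ≤ |B| := abs_nonneg B
  have h0 : ∀ b, 0 ≤ f b + |B| := fun b => by have := (abs_le.mp (hf' b)).1; linarith
  have hub : ∀ b, f b + |B| ≤ 2 * |B| := fun b => by have := (abs_le.mp (hf' b)).2; linarith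
  have key := pexp_bind_nonneg p k h0 hub
  have e1 : pexp (p.bind k) (fun b => f b + |B|) = pexp (p.bind k) f + |B| := by
    rw [pexp_add (p.bind k) hf' (g := fun _ => |B|) (C := |B|) (fun b => by simp [abs_of_nonneg hB]),
      pexp_const]
  have e2 : ∀ a : α, pexp (k a) (fun b => f b + |B|) = pexp (k a) f + |B| := fun a => by
    rw [pexp_add (k a) hf' (g := fun _ => |B|) (C := |B|) (fun b => by simp [abs_of_nonneg hB]),
      pexp_const]
  simp_rw [e2] at key
  have e3 : pexp p (fun a => pexp (k a) f + |B|) = pexp p (fun a => pexp (k a) f) + |B| := by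
    rw [pexp_add p (f := fun a => pexp (k a) f) (B := |B|)
      (fun a => pexp_abs_le (k a) hB hf') (g := fun _ => |B|) (C := |B|)
      (fun b => by simp [abs_of_nonneg hB]), pexp_const]
  rw [e1, e3] at key
  linarith


lemma pexp_pure (a : α) (f : α → ℝ) : pexp (PMF.pure a) f = f a := by
  unfold pexp
  rw [tsum_eq_single a]
  · simp [PMF.pure_apply]
  · intro b hb; simp [PMF.pure_apply, hb]

lemma pexp_map (p : PMF α) (e : α → β) {f : β → ℝ} {B : ℝ} (hf : ∀ b, |f b| ≤ B) :
    pexp (p.map e) f = pexp p (fun a => f (e a)) := by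
  rw [PMF.map, pexp_bind p _ hf]
  exact congrArg (pexp p) (funext fun a => pexp_pure (e a) f)

lemma pexp_bern {r : ℝ} (hr0 : 0 ≤ r) (hr1 : r ≤ 1) (f : Bool → ℝ) :
    pexp (bern r) f = (1 - r) * f false + r * f true := by
  unfold pexp bern
  rw [tsum_bool]
  have hmin : min (Real.toNNReal r) 1 = Real.toNNReal r :=
    min_eq_left (by simpa using Real.toNNReal_le_toNNReal hr1)
  simp only [PMF.bernoulli_apply, hmin, Bool.cond_false, Bool.cond_true]
  rw [show ((Real.toNNReal r : NNReal) : ℝ≥0∞) = ENNReal.ofReal r from rfl]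
  rw [ENNReal.toReal_ofReal hr0]
  congr 2
  rw [ENNReal.coe_toReal, NNReal.coe_sub (by simpa using Real.toNNReal_le_toNNReal hr1),
    NNReal.coe_one, Real.coe_toNNReal _ hr0]

lemma pexp_exDist {X : Type*} (μ : PMF X) {p : X → ℝ} (hp : Predictor p)
    {f : X × Bool → ℝ} {B : ℝ} (hf : ∀ a, |f a| ≤ B) :
    pexp (exDist μ p) f =
      pexp μ (fun x => (1 - p x) * f (x, false) + p x * f (x, true)) := by
  unfold exDist
  rw [pexp_bind μ _ hf]
  exact congrArg (pexp μ) (funext fun x => by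
    rw [pexp_map _ _ hf, pexp_bern (hp x).1 (hp x).2])

lemma pexp_iid_succ (q : PMF α) (n : ℕ) {h : (Fin (n+1) → α) → ℝ} {B : ℝ}
    (hh : ∀ v, |h v| ≤ B) :
    pexp (iid q (n+1)) h = pexp (iid q n) (fun v => pexp q (fun a => h (Fin.cons a v))) := by
  show pexp ((iid q n).bind fun v => q.map fun a => Fin.cons a v) h = _
  rw [pexp_bind _ _ hh]
  exact congrArg (pexp (iid q n)) (funext fun v => pexp_map q _ hh)

lemma pexp_exp_sum (q : PMF α) {g : α → ℝ} {B : ℝ} (hB : 0 ≤ B) (hg : ∀ a, |g a| ≤ B)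
    (c : ℝ) : ∀ n : ℕ,
    pexp (iid q n) (fun v => Real.exp (∑ i, c * g (v i)))
      = (pexp q (fun a => Real.exp (c * g a))) ^ n := by
  have hbnd : ∀ m : ℕ, ∀ v : Fin m → α,
      |Real.exp (∑ i, c * g (v i))| ≤ Real.exp (m * (|c| * B)) := by
    intro m v
    rw [abs_of_pos (Real.exp_pos _)]
    apply Real.exp_le_exp.mpr
    calc ∑ i, c * g (v i) ≤ ∑ i : Fin m, |c| * B := by
          apply Finset.sum_le_sum
          intro i _
          calc c * g (v i) ≤ |c * g (v i)| := le_abs_self _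
            _ = |c| * |g (v i)| := abs_mul _ _
            _ ≤ |c| * B := mul_le_mul_of_nonneg_left (hg _) (abs_nonneg c)
      _ = m * (|c| * B) := by simp [Finset.sum_const, mul_comm]
  intro n
  induction n with
  | zero =>
    show pexp (PMF.pure (Fin.elim0)) _ = _
    rw [pexp_pure]
    simp
  | succ n ih =>
    rw [pexp_iid_succ q n (hbnd (n+1))]
    have inner : ∀ v : Fin n → α,
        pexp q (fun a => Real.exp (∑ i, c * g ((Fin.cons a v : Fin (n+1) → α) i)))
          = Real.exp (∑ i, c * g (v i)) * pexp q (fun a => Real.exp (c * g a)) := by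
      intro v
      have e1 : ∀ a : α, Real.exp (∑ i, c * g ((Fin.cons a v : Fin (n+1) → α) i))
          = Real.exp (∑ i, c * g (v i)) * Real.exp (c * g a) := by
        intro a
        rw [← Real.exp_add]
        congr 1
        rw [show (∑ i : Fin (n+1), c * g ((Fin.cons a v : Fin (n+1) → α) i))
            = c * g a + ∑ i : Fin n, c * g (v i) by
          rw [Fin.sum_univ_succ]; simp [Fin.cons]]
        ring
      simp_rw [e1]
      rw [show (fun a => Real.exp (∑ i, c * g (v i)) * Real.exp (c * g a))
          = (fun a => Real.exp (∑ i, c * g (v i)) * (fun a => Real.exp (c * g a)) a) from rfl,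
        pexp_smul]
    simp_rw [inner]
    rw [show (fun v : Fin n → α => Real.exp (∑ i, c * g (v i)) * pexp q fun a => Real.exp (c * g a))
        = (fun v : Fin n → α => (pexp q fun a => Real.exp (c * g a)) * Real.exp (∑ i, c * g (v i))) from funext fun v => mul_comm _ _,
      pexp_smul, ih, pow_succ, mul_comm]

lemma markov (q : PMF α) {h : α → ℝ} {c B : ℝ} (h0 : ∀ a, 0 ≤ h a) (hub : ∀ a, h a ≤ B) (hc : 0 < c)
    {E : Set α} (hE : ∀ a ∈ E, c ≤ h a) : prob q E ≤ ENNReal.ofReal (pexp q h / c) := by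
  have key : ENNReal.ofReal c * prob q E ≤ ENNReal.ofReal (pexp q h) := by
    rw [pexp_eq_toReal q h0]
    unfold prob
    rw [PMF.toOuterMeasure_apply, ← ENNReal.tsum_mul_left]
    rw [ENNReal.ofReal_toReal]
    · refine ENNReal.tsum_le_tsum fun a => ?_
      by_cases ha : a ∈ E
      · rw [Set.indicator_of_mem ha]
        rw [mul_comm]
        exact mul_le_mul_right (ENNReal.ofReal_le_ofReal (hE a ha)) _
      · rw [Set.indicator_of_notMem ha]
        simp
    · exact etsum_ne_top q (f := h) hub
  rw [ENNReal.ofReal_div_of_pos hc]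
  rw [ENNReal.le_div_iff_mul_le (Or.inl (by simp [ENNReal.ofReal_eq_zero]; linarith)) (Or.inl ENNReal.ofReal_ne_top)]
  rw [mul_comm]
  exact key


lemma mgf_le (q : PMF α) {g : α → ℝ} {B : ℝ} (hB : 0 < B) (hg : ∀ a, |g a| ≤ B)
    (hmean : pexp q g = 0) (l : ℝ) :
    pexp q (fun a => Real.exp (l * g a)) ≤ Real.exp (l^2 * B^2 / 2) := by
  set c1 : ℝ := (Real.exp (l*B) - Real.exp (-(l*B))) / (2*B) with hc1
  set c2 : ℝ := (Real.exp (l*B) + Real.exp (-(l*B))) / 2 with hc2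
  have hBne : (2:ℝ)*B ≠ 0 := by positivity
  have pointwise : ∀ a, Real.exp (l * g a) ≤ c1 * g a + c2 := by
    intro a
    have hx := abs_le.mp (hg a)
    have hs0 : (0:ℝ) ≤ (B - g a)/(2*B) := div_nonneg (by linarith [hx.2]) (by linarith)
    have ht0 : (0:ℝ) ≤ (B + g a)/(2*B) := div_nonneg (by linarith [hx.1]) (by linarith)
    have hst : (B - g a)/(2*B) + (B + g a)/(2*B) = 1 := by field_simp; ring
    have hcx := convexOn_exp.2 (Set.mem_univ (-(l*B))) (Set.mem_univ (l*B)) hs0 ht0 hst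
    simp only [smul_eq_mul] at hcx
    have harg : (B - g a)/(2*B) * (-(l*B)) + (B + g a)/(2*B) * (l*B) = l * g a := by
      field_simp; ring
    rw [harg] at hcx
    refine hcx.trans_eq ?_
    rw [hc1, hc2]; field_simp; ring
  have hlb : ∀ a, |Real.exp (l * g a)| ≤ Real.exp (|l| * B) := by
    intro a
    rw [abs_of_pos (Real.exp_pos _)]
    apply Real.exp_le_exp.mpr
    calc l * g a ≤ |l * g a| := le_abs_self _
      _ = |l| * |g a| := abs_mul _ _
      _ ≤ |l| * B := mul_le_mul_of_nonneg_left (hg a) (abs_nonneg l)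
  have hrb : ∀ a, |c1 * g a + c2| ≤ |c1| * B + |c2| := by
    intro a
    calc |c1 * g a + c2| ≤ |c1 * g a| + |c2| := abs_add_le _ _
      _ = |c1| * |g a| + |c2| := by rw [abs_mul]
      _ ≤ |c1| * B + |c2| := by
          have := mul_le_mul_of_nonneg_left (hg a) (abs_nonneg c1); linarith
  have h1 : pexp q (fun a => Real.exp (l * g a)) ≤ pexp q (fun a => c1 * g a + c2) :=
    pexp_mono q hlb hrb pointwise
  have h2 : pexp q (fun a => c1 * g a + c2) = c2 := by
    rw [pexp_add q (f := fun a => c1 * g a) (B := |c1| * B) (g := fun _ => c2) (C := |c2|)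
      (fun a => by rw [abs_mul]; exact mul_le_mul_of_nonneg_left (hg a) (abs_nonneg c1))
      (fun a => le_rfl),
      pexp_smul, hmean, pexp_const, mul_zero, zero_add]
  have h3 : c2 = Real.cosh (l * B) := by rw [Real.cosh_eq]
  have h4 : Real.cosh (l*B) ≤ Real.exp ((l*B)^2/2) := Real.cosh_le_exp_half_sq _
  refine h1.trans ?_
  rw [h2, h3]
  refine h4.trans_eq ?_
  congr 1; ring

lemma chernoff (q : PMF α) {g : α → ℝ} {B : ℝ} (hB : 0 < B) (hg : ∀ a, |g a| ≤ B)
    (hmean : pexp q g = 0) {t : ℝ} (ht : 0 < t) (n : ℕ) :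
    prob (iid q n) {v | (n:ℝ) * t ≤ ∑ i, g (v i)}
      ≤ ENNReal.ofReal (Real.exp (-(n:ℝ) * t^2 / (2*B^2))) := by
  set l : ℝ := t / B^2 with hl
  have hl0 : 0 < l := div_pos ht (by positivity)
  have hub : ∀ v : Fin n → α, Real.exp (∑ i, l * g (v i)) ≤ Real.exp ((n:ℝ) * (l * B)) := by
    intro v
    apply Real.exp_le_exp.mpr
    calc ∑ i, l * g (v i) ≤ ∑ _i : Fin n, l * B := Finset.sum_le_sum (fun i _ =>
          mul_le_mul_of_nonneg_left ((le_abs_self _).trans (hg _)) hl0.le)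
      _ = (n:ℝ) * (l * B) := by simp [Finset.sum_const, mul_comm]
  have hmk := markov (iid q n) (h := fun v => Real.exp (∑ i, l * g (v i)))
    (c := Real.exp (l * ((n:ℝ) * t))) (B := Real.exp ((n:ℝ) * (l * B)))
    (fun v => (Real.exp_pos _).le) hub (Real.exp_pos _)
    (E := {v | (n:ℝ) * t ≤ ∑ i, g (v i)})
    (fun v hv => by
      apply Real.exp_le_exp.mpr
      rw [← Finset.mul_sum]
      exact mul_le_mul_of_nonneg_left hv hl0.le)
  refine hmk.trans ?_
  apply ENNReal.ofReal_le_ofReal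
  have hM : pexp q (fun a => Real.exp (l * g a)) ≤ Real.exp (l^2 * B^2/2) :=
    mgf_le q hB hg hmean l
  have hM0 : 0 ≤ pexp q (fun a => Real.exp (l * g a)) :=
    pexp_nonneg q (fun a => (Real.exp_pos _).le)
  rw [pexp_exp_sum q hB.le hg l n]
  calc (pexp q fun a => Real.exp (l * g a)) ^ n / Real.exp (l * ((n:ℝ) * t))
      ≤ Real.exp (l^2*B^2/2) ^ n / Real.exp (l * ((n:ℝ) * t)) := by
        gcongr
        all_goals first | exact hM0 | exact hM
    _ = Real.exp ((n:ℝ) * (l^2*B^2/2) - l * ((n:ℝ)*t)) := by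
        rw [← Real.exp_nat_mul, Real.exp_sub, mul_comm (n:ℝ)]
    _ ≤ Real.exp (-(n:ℝ) * t^2 / (2*B^2)) := by
        apply le_of_eq
        congr 1
        rw [hl]
        have hB2 : B^2 ≠ 0 := by positivity
        field_simp
        ring

lemma prob_univ (q : PMF α) : prob q Set.univ = 1 := by
  unfold prob
  rw [PMF.toOuterMeasure_apply]
  simp only [Set.indicator_univ]
  exact q.tsum_coe

lemma prob_ge_of_compl (q : PMF α) {E : Set α} {δ : ℝ} (hδ : 0 ≤ δ)
    (h : prob q Eᶜ ≤ ENNReal.ofReal δ) :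
    ENNReal.ofReal (1 - δ) ≤ prob q E := by
  have h1 : (1:ℝ≥0∞) ≤ prob q E + prob q Eᶜ := by
    rw [← prob_univ q, ← Set.union_compl_self E]
    exact MeasureTheory.measure_union_le (μ := q.toOuterMeasure) E Eᶜ
  have h2 : (1:ℝ≥0∞) ≤ prob q E + ENNReal.ofReal δ := h1.trans (by gcongr)
  have h3 : (1:ℝ≥0∞) - ENNReal.ofReal δ ≤ prob q E := by
    exact tsub_le_iff_right.mpr h2
  refine le_trans ?_ h3
  rw [← ENNReal.ofReal_one, ← ENNReal.ofReal_sub _ hδ]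

lemma prob_mono (q : PMF α) {E F : Set α} (h : E ⊆ F) : prob q E ≤ prob q F :=
  q.toOuterMeasure.mono h


lemma pexp_sub (q : PMF α) {f g : α → ℝ} {B C : ℝ}
    (hf : ∀ a, |f a| ≤ B) (hg : ∀ a, |g a| ≤ C) :
    pexp q (fun a => f a - g a) = pexp q f - pexp q g := by
  have h1 : pexp q (fun a => f a + (-1) * g a) = pexp q f + pexp q (fun a => (-1) * g a) :=
    pexp_add q hf (g := fun a => (-1) * g a) (C := C)
      (fun a => by simp only [neg_one_mul, abs_neg]; exact hg a)
  have h2 : pexp q (fun a => (-1) * g a) = -pexp q g := by rw [pexp_smul]; ring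
  have h3 : (fun a => f a - g a) = (fun a => f a + (-1) * g a) := by funext a; ring
  rw [h3, h1, h2]; ring

lemma inn_comm (μ : PMF X) (f g : X → ℝ) : inn μ f g = inn μ g f :=
  congrArg (pexp μ) (funext fun x => mul_comm _ _)

lemma inn_sub_left (μ : PMF X) {p p' d : X → ℝ} {A B C : ℝ}
    (hp : ∀ x, |p x| ≤ A) (hp' : ∀ x, |p' x| ≤ B) (hd : ∀ x, |d x| ≤ C) (hC : 0 ≤ C) :
    inn μ (p - p') d = inn μ p d - inn μ p' d := by
  unfold inn
  rw [← pexp_sub μ (B := A * C) (C := B * C)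
    (fun x => by rw [abs_mul]; exact mul_le_mul (hp x) (hd x) (abs_nonneg _) ((abs_nonneg _).trans (hp x)))
    (fun x => by rw [abs_mul]; exact mul_le_mul (hp' x) (hd x) (abs_nonneg _) ((abs_nonneg _).trans (hp' x)))]
  exact congrArg (pexp μ) (funext fun x => by simp [sub_mul])

lemma inn_sub_right (μ : PMF X) {p d d' : X → ℝ} {A B C : ℝ}
    (hp : ∀ x, |p x| ≤ A) (hd : ∀ x, |d x| ≤ B) (hd' : ∀ x, |d' x| ≤ C) (hA : 0 ≤ A) :
    inn μ p (d - d') = inn μ p d - inn μ p d' := by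
  unfold inn
  rw [← pexp_sub μ (B := A * B) (C := A * C)
    (fun x => by rw [abs_mul]; exact mul_le_mul (hp x) (hd x) (abs_nonneg _) hA)
    (fun x => by rw [abs_mul]; exact mul_le_mul (hp x) (hd' x) (abs_nonneg _) hA)]
  exact congrArg (pexp μ) (funext fun x => by simp [mul_sub])

lemma inn_abs_le (μ : PMF X) {p d : X → ℝ} {A B : ℝ} (hA : 0 ≤ A) (hB : 0 ≤ B)
    (hp : ∀ x, |p x| ≤ A) (hd : ∀ x, |d x| ≤ B) : |inn μ p d| ≤ A * B :=
  pexp_abs_le μ (mul_nonneg hA hB)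
    (fun x => by rw [abs_mul]; exact mul_le_mul (hp x) (hd x) (abs_nonneg _) hA)

lemma pred_abs_le {p : X → ℝ} (hp : Predictor p) : ∀ x, |p x| ≤ 1 := fun x =>
  abs_le.mpr ⟨by linarith [(hp x).1], (hp x).2⟩

lemma dnorm_bddAbove (μ : PMF X) {P : Set (X → ℝ)} (hP : ∀ p ∈ P, Predictor p)
    {f : X → ℝ} {B : ℝ} (hB : 0 ≤ B) (hf : ∀ x, |f x| ≤ B) :
    BddAbove ((fun g => |inn μ f g|) '' P) := by
  refine ⟨B, fun y hy => ?_⟩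
  obtain ⟨g, hg, rfl⟩ := hy
  have := inn_abs_le μ hB zero_le_one hf (pred_abs_le (hP g hg))
  simpa using this

lemma hull_mem_prop (μ : PMF X) {P : Set (X → ℝ)} (hP : ∀ p ∈ P, Predictor p)
    {f : X → ℝ} (hf : ∀ x, |f x| ≤ 2) :
    ∀ p ∈ convexHull ℝ (P ∪ -P), (∀ x, |p x| ≤ 1) ∧ |inn μ p f| ≤ dnorm μ P f := by
  set S : Set (X → ℝ) := {p | (∀ x, |p x| ≤ 1) ∧ |inn μ p f| ≤ dnorm μ P f} with hS
  have hbdd := dnorm_bddAbove μ hP (by norm_num : (0:ℝ) ≤ 2) hf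
  have hsub : P ∪ -P ⊆ S := by
    rintro p (hp | hp)
    · refine ⟨pred_abs_le (hP p hp), ?_⟩
      rw [inn_comm]
      exact le_csSup hbdd ⟨p, hp, rfl⟩
    · rw [Set.mem_neg] at hp
      refine ⟨fun x => by
        have h := pred_abs_le (hP (-p) hp) x
        rw [Pi.neg_apply, abs_neg] at h
        exact h, ?_⟩
      have h1 : inn μ p f = -(inn μ (-p) f) := by
        unfold inn
        have : (fun x => p x * f x) = fun x => (-1) * ((-p) x * f x) := by
          funext x; simp
        rw [this, pexp_smul]; ring
      rw [h1, abs_neg, inn_comm]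
      exact le_csSup hbdd ⟨-p, hp, rfl⟩
  have hconv : Convex ℝ S := by
    rintro p ⟨hp1, hp2⟩ q ⟨hq1, hq2⟩ a b ha hb hab
    have hmem : ∀ x, (a • p + b • q) x = a * p x + b * q x := fun x => by
      simp [Pi.add_apply, Pi.smul_apply, smul_eq_mul]
    constructor
    · intro x
      rw [hmem x]
      calc |a * p x + b * q x| ≤ |a * p x| + |b * q x| := abs_add_le _ _
        _ = a * |p x| + b * |q x| := by
            rw [abs_mul, abs_mul, abs_of_nonneg ha, abs_of_nonneg hb]
        _ ≤ a * 1 + b * 1 := by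
            have := mul_le_mul_of_nonneg_left (hp1 x) ha
            have := mul_le_mul_of_nonneg_left (hq1 x) hb
            linarith
        _ = 1 := by linarith
    · have hlin : inn μ (a • p + b • q) f = a * inn μ p f + b * inn μ q f := by
        unfold inn
        have e : (fun x => (a • p + b • q) x * f x)
            = fun x => a * (p x * f x) + b * (q x * f x) := by
          funext x; rw [hmem x]; ring
        rw [e, pexp_add μ (f := fun x => a * (p x * f x)) (B := |a| * 2)
          (g := fun x => b * (q x * f x)) (C := |b| * 2)
          (fun x => by
            rw [abs_mul]
            refine mul_le_mul_of_nonneg_left ?_ (abs_nonneg a)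
            rw [abs_mul]
            calc |p x| * |f x| ≤ 1 * 2 :=
              mul_le_mul (hp1 x) (hf x) (abs_nonneg _) zero_le_one
              _ = 2 := by ring)
          (fun x => by
            rw [abs_mul]
            refine mul_le_mul_of_nonneg_left ?_ (abs_nonneg b)
            rw [abs_mul]
            calc |q x| * |f x| ≤ 1 * 2 :=
              mul_le_mul (hq1 x) (hf x) (abs_nonneg _) zero_le_one
              _ = 2 := by ring),
          pexp_smul, pexp_smul]
      rw [hlin]
      calc |a * inn μ p f + b * inn μ q f| ≤ |a * inn μ p f| + |b * inn μ q f| := abs_add_le _ _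
        _ = a * |inn μ p f| + b * |inn μ q f| := by
            rw [abs_mul, abs_mul, abs_of_nonneg ha, abs_of_nonneg hb]
        _ ≤ a * dnorm μ P f + b * dnorm μ P f := by
            have := mul_le_mul_of_nonneg_left hp2 ha
            have := mul_le_mul_of_nonneg_left hq2 hb
            linarith
        _ = dnorm μ P f := by rw [← add_mul, hab, one_mul]
  exact fun p hp => convexHull_min hsub hconv hp

lemma mean_fd (μ : PMF X) {p d : X → ℝ} (hp : Predictor p) (hd : ∀ x, |d x| ≤ 1) :
    pexp (exDist μ p) (fun z => if z.2 then d z.1 else 0) = inn μ p d := by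
  rw [pexp_exDist μ hp (B := 1) (fun z => by
    by_cases h : z.2 <;> simp [h, hd _])]
  exact congrArg (pexp μ) (funext fun x => by simp [mul_comm])

lemma exists_min_cover (μ : PMF X) (P D : Set (X → ℝ)) (ε : ℝ)
    (h : covN μ P D ε ≠ ⊤) :
    ∃ C : Set (X → ℝ), IsCover μ P D ε C ∧ C.Finite ∧ C.encard = covN μ P D ε := by
  have h0 : ∃ C₀ : Set (X → ℝ), IsCover μ P D ε C₀ ∧ C₀.encard ≠ ⊤ := by
    by_contra hcon
    push_neg at hcon
    apply h
    unfold covN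
    rw [iInf_eq_top]
    intro C
    rw [iInf_eq_top]
    intro hC
    exact hcon C hC
  obtain ⟨C₀, hC₀, hC₀fin⟩ := h0
  set T : Set ℕ := {m : ℕ | ∃ C : Set (X → ℝ), IsCover μ P D ε C ∧ C.encard = (m : ℕ∞)} with hT
  have hTne : T.Nonempty := by
    obtain ⟨m, hm⟩ := WithTop.ne_top_iff_exists.mp hC₀fin
    exact ⟨m, C₀, hC₀, hm.symm⟩
  obtain ⟨C, hC, hCcard⟩ := Nat.sInf_mem hTne
  refine ⟨C, hC, by rw [← Set.encard_ne_top_iff, hCcard]; exact WithTop.coe_ne_top, ?_⟩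
  rw [hCcard]
  apply le_antisymm
  · -- (sInf T) ≤ covN : every cover has encard ≥ sInf T
    unfold covN
    apply le_iInf
    intro C'
    apply le_iInf
    intro hC'
    rcases eq_or_ne C'.encard ⊤ with htop | hfin
    · rw [htop]; exact le_top
    · obtain ⟨m, hm⟩ := WithTop.ne_top_iff_exists.mp hfin
      rw [← hm]
      have hle : sInf T ≤ m := Nat.sInf_le ⟨C', hC', hm.symm⟩
      exact Nat.cast_le.mpr hle
  · have h1 : covN μ P D ε ≤ C.encard := iInf₂_le C hC
    rwa [hCcard] at h1


end Aux

end OI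


open OI

set_option maxHeartbeats 2000000 in
/-- if the target predictor lies in the symmetric convex hull of `P`, then
`n = O(ε⁻²(log N_{μ,P}(D,ε/4) + log(2/δ)))` samples suffice to output a predictor `p` with
`‖p − p*‖_{μ,D} ≤ ε` with probability at least `1 − δ`. -/
theorem statement_14 :
    ∃ c : ℝ, 0 < c ∧
      ∀ (X : Type) (_ : Nonempty X) (μ : PMF X) (P D : Set (X → ℝ)),
        P.Nonempty → (∀ p ∈ P, Predictor p) →
        D.Nonempty → (∀ d ∈ D, Dist1 d) →
        ∀ ε δ : ℝ, 0 < ε → δ ∈ Set.Ioo (0 : ℝ) 1 →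
          covN μ P D (ε / 4) ≠ ⊤ →
            ∃ n : ℕ,
              (n : ℝ) ≤ c * ε⁻¹ ^ 2 *
                (elog2 (covN μ P D (ε / 4)) + Real.logb 2 (2 / δ)) ∧
              ∃ A : Learner X n, ∀ pstar ∈ convexHull ℝ (P ∪ -P), Predictor pstar →
                Achieves μ D ε δ pstar A := by
  classical
  refine ⟨100, by norm_num, ?_⟩
  intro X _hX μ P D hPne hP hDne hD ε δ hε hδ hcov
  obtain ⟨hδ0, hδ1⟩ := hδ
  obtain ⟨C, hC, hCfin, hCcard⟩ := OI.Aux.exists_min_cover μ P D (ε/4) hcov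
  obtain ⟨d₀, hd₀⟩ := hDne
  obtain ⟨c₀, hc₀, _⟩ := hC.2 d₀ hd₀
  have hCne : C.Nonempty := ⟨c₀, hc₀⟩
  obtain ⟨N, hNcard⟩ : ∃ N : ℕ, C.encard = (N : ℕ∞) := by
    obtain ⟨m, hm⟩ := WithTop.ne_top_iff_exists.mp (Set.encard_ne_top_iff.mpr hCfin)
    exact ⟨m, hm.symm⟩
  have hN1 : 1 ≤ N := by
    have h := Set.one_le_encard_iff_nonempty.mpr hCne
    rw [hNcard] at h
    exact_mod_cast h
  have hNR : (1:ℝ) ≤ (N:ℝ) := by exact_mod_cast hN1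
  have helog : elog2 (covN μ P D (ε/4)) = Real.logb 2 (N:ℝ) := by
    rw [← hCcard, hNcard]
    simp [elog2]
  have hln2pos : (0:ℝ) < Real.log 2 := Real.log_pos (by norm_num)
  have h2δ : (2:ℝ) ≤ 2/δ := by
    rw [le_div_iff₀ hδ0]; nlinarith
  have hlog2δ : (1:ℝ) ≤ Real.logb 2 (2/δ) := by
    rw [Real.logb, le_div_iff₀ hln2pos, one_mul]
    exact Real.log_le_log (by norm_num) h2δ
  have hlogN : (0:ℝ) ≤ Real.logb 2 (N:ℝ) :=
    Real.logb_nonneg (by norm_num) hNR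
  rw [helog]
  set L : ℝ := Real.logb 2 (N:ℝ) + Real.logb 2 (2/δ) with hLdef
  have hL1 : (1:ℝ) ≤ L := by rw [hLdef]; linarith
  by_cases hεb : 1 ≤ ε
  · -- trivial case: 0 samples suffice
    refine ⟨0, ?_, ?_⟩
    · have h0 : (0:ℝ) ≤ ε⁻¹ ^ 2 * L := mul_nonneg (sq_nonneg _) (by linarith)
      push_cast
      nlinarith
    · obtain ⟨p₀, hp₀⟩ := hPne
      refine ⟨fun _ => PMF.pure p₀, ?_⟩
      intro pstar _hhull hpred
      unfold Achieves
      have hout : outDist μ pstar (fun _ => PMF.pure p₀) = PMF.pure p₀ :=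
        PMF.bind_const (iid (exDist μ pstar) 0) (PMF.pure p₀)
      rw [hout]
      have hmem : p₀ ∈ {p : X → ℝ | Predictor p ∧ dnorm μ D (p - pstar) ≤ ε} := by
        refine ⟨hP p₀ hp₀, ?_⟩
        apply Real.sSup_le
        · rintro y ⟨d, hdD, rfl⟩
          have h1 : |inn μ (p₀ - pstar) d| ≤ 1 * 1 :=
            OI.Aux.inn_abs_le μ zero_le_one zero_le_one
              (fun x => by
                have a1 := hP p₀ hp₀ x
                have a2 := hpred x
                rw [Pi.sub_apply, abs_le]
                exact ⟨by linarith [a1.1, a2.2], by linarith [a1.2, a2.1]⟩)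
              (fun x => abs_le.mpr ⟨(hD d hdD x).1, (hD d hdD x).2⟩)
          simp only
          linarith
        · linarith
      unfold prob
      rw [PMF.toOuterMeasure_pure_apply, if_pos hmem]
      exact ENNReal.ofReal_le_one.mpr (by linarith)
  · -- main case
    push_neg at hεb
    have hεinv : (1:ℝ) ≤ ε⁻¹ := (one_le_inv₀ hε).mpr hεb.le
    have hNδpos : (0:ℝ) < 2*(N:ℝ)/δ := by positivity
    have hNδ1 : (1:ℝ) < 2*(N:ℝ)/δ := by
      rw [lt_div_iff₀ hδ0]; nlinarith
    have hlogpos : 0 < Real.log (2*(N:ℝ)/δ) := Real.log_pos hNδ1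
    set y : ℝ := 128 * ε⁻¹^2 * Real.log (2*(N:ℝ)/δ) with hy
    have hypos : 0 < y := by
      apply mul_pos (mul_pos (by norm_num) (pow_pos (lt_of_lt_of_le one_pos hεinv) 2)) hlogpos
    set n : ℕ := ⌈y⌉₊ with hn
    have hn1 : 1 ≤ n := Nat.one_le_ceil_iff.mpr hypos
    have hnn : (1:ℝ) ≤ (n:ℝ) := by exact_mod_cast hn1
    have hnpos : (0:ℝ) < (n:ℝ) := by linarith
    have hny : y ≤ (n:ℝ) := Nat.le_ceil y
    refine ⟨n, ?_, ?_⟩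
    · -- sample complexity bound
      have h1 : (n:ℝ) < y + 1 := Nat.ceil_lt_add_one hypos.le
      have hlogeq : Real.log (2*(N:ℝ)/δ) = Real.log 2 * L := by
        have e1 : (2*(N:ℝ)/δ) = (N:ℝ) * (2/δ) := by ring
        rw [e1, Real.log_mul (by positivity) (by positivity), hLdef, Real.logb, Real.logb]
        field_simp
      have hln2 : Real.log 2 ≤ 0.7 := by
        have := Real.log_two_lt_d9
        norm_num at this ⊢
        linarith
      have hεL : (1:ℝ) ≤ ε⁻¹^2 * L := by nlinarith
      have h2 : y + 1 ≤ 100 * ε⁻¹^2 * L := by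
        rw [hy, hlogeq]
        nlinarith [mul_nonneg (sq_nonneg ε⁻¹) (by linarith : (0:ℝ) ≤ L)]
      linarith
    · -- the learner
      obtain ⟨p₀, hp₀⟩ := hPne
      set fd : (X → ℝ) → X × Bool → ℝ := fun d z => if z.2 then d z.1 else 0 with hfd
      set Sm : (X → ℝ) → (Fin n → X × Bool) → ℝ := fun d v => ∑ i, fd d (v i) with hSm
      set Good : (X → ℝ) → (Fin n → X × Bool) → Prop := fun p v =>
        Predictor p ∧ p ∈ convexHull ℝ (P ∪ -P) ∧
          ∀ d ∈ C, |(n:ℝ) * inn μ p d - Sm d v| ≤ (n:ℝ) * (ε/4) with hGood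
      set ch : (Fin n → X × Bool) → (X → ℝ) := fun v =>
        if h : ∃ p, Good p v then h.choose else p₀ with hch
      refine ⟨fun v => PMF.pure (ch v), ?_⟩
      intro pstar hhull hpred
      unfold Achieves
      set q : PMF (X × Bool) := exDist μ pstar with hq
      set Et : Set (X → ℝ) := {p | Predictor p ∧ dnorm μ D (p - pstar) ≤ ε} with hEt
      have hprob : prob (outDist μ pstar (fun v => PMF.pure (ch v))) Et
          = prob (iid q n) (ch ⁻¹' Et) := by
        have hout : outDist μ pstar (fun v => PMF.pure (ch v)) = (iid q n).map ch := rfl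
        rw [hout]
        exact PMF.toOuterMeasure_map_apply ch (iid q n) Et
      rw [hprob]
      set G : Set (Fin n → X × Bool) :=
        {v | ∀ d ∈ C, |Sm d v - (n:ℝ) * inn μ pstar d| ≤ (n:ℝ) * (ε/4)} with hG
      -- boundedness facts
      have hpsB : ∀ x, |pstar x| ≤ 1 := OI.Aux.pred_abs_le hpred
      -- G ⊆ ch ⁻¹' Et
      have hsub : G ⊆ ch ⁻¹' Et := by
        intro v hv
        rw [hG, Set.mem_setOf_eq] at hv
        have hex : ∃ p, Good p v := by
          refine ⟨pstar, hpred, hhull, fun d hd => ?_⟩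
          have h1 := hv d hd
          rw [show (n:ℝ) * inn μ pstar d - Sm d v
            = -(Sm d v - (n:ℝ) * inn μ pstar d) by ring, abs_neg]
          exact h1
        have hgood : Good (ch v) v := by
          rw [hch]
          simp only
          rw [dif_pos hex]
          exact hex.choose_spec
        obtain ⟨hpredc, hhullc, hclose⟩ := hgood
        refine ⟨hpredc, ?_⟩
        have hchB : ∀ x, |ch v x| ≤ 1 := fun x => by
          have a1 := hpredc x
          exact abs_le.mpr ⟨by linarith [a1.1], a1.2⟩
        apply Real.sSup_le
        · rintro z ⟨g, hgD, rfl⟩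
          obtain ⟨cel, hcel, hcov4⟩ := hC.2 g hgD
          have hgb : ∀ x, |g x| ≤ 1 := fun x => abs_le.mpr ⟨(hD g hgD x).1, (hD g hgD x).2⟩
          have hcb : ∀ x, |cel x| ≤ 1 := fun x =>
            abs_le.mpr ⟨(hD cel (hC.1 hcel) x).1, (hD cel (hC.1 hcel) x).2⟩
          have hfb : ∀ x, |(g - cel) x| ≤ 2 := fun x => by
            rw [Pi.sub_apply, sub_eq_add_neg]
            calc |g x + -(cel x)| ≤ |g x| + |(-(cel x))| := abs_add_le _ _
              _ ≤ 2 := by rw [abs_neg]; linarith [hgb x, hcb x]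
          have hchInn : |inn μ (ch v) (g - cel)| ≤ dnorm μ P (g - cel) :=
            (OI.Aux.hull_mem_prop μ hP hfb _ hhullc).2
          have hpsInn : |inn μ pstar (g - cel)| ≤ dnorm μ P (g - cel) :=
            (OI.Aux.hull_mem_prop μ hP hfb _ hhull).2
          -- closeness on the covering element
          have h1 : |inn μ (ch v) cel - inn μ pstar cel| ≤ ε/2 := by
            have a1 := hclose cel hcel
            have a2 := hv cel hcel
            have e0 : (n:ℝ) * inn μ (ch v) cel - (n:ℝ) * inn μ pstar cel
                = ((n:ℝ) * inn μ (ch v) cel - Sm cel v)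
                  + (Sm cel v - (n:ℝ) * inn μ pstar cel) := by ring
            have h12 : |(n:ℝ) * inn μ (ch v) cel - (n:ℝ) * inn μ pstar cel|
                ≤ (n:ℝ) * (ε/4) + (n:ℝ) * (ε/4) := by
              rw [e0]
              exact (abs_add_le _ _).trans (add_le_add a1 a2)
            rw [← mul_sub, abs_mul, abs_of_nonneg hnpos.le] at h12
            have h13 : (n:ℝ) * |inn μ (ch v) cel - inn μ pstar cel| ≤ (n:ℝ) * (ε/2) := by
              linarith
            exact le_of_mul_le_mul_left h13 hnpos
          have e1 : inn μ ((ch v) - pstar) g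
              = (inn μ (ch v) cel - inn μ pstar cel)
                + inn μ (ch v) (g - cel) - inn μ pstar (g - cel) := by
            rw [OI.Aux.inn_sub_left μ hchB hpsB hgb zero_le_one,
              OI.Aux.inn_sub_right μ hchB hgb hcb zero_le_one,
              OI.Aux.inn_sub_right μ hpsB hgb hcb zero_le_one]
            ring
          simp only
          rw [e1]
          calc |(inn μ (ch v) cel - inn μ pstar cel)
                + inn μ (ch v) (g - cel) - inn μ pstar (g - cel)|
              ≤ |(inn μ (ch v) cel - inn μ pstar cel) + inn μ (ch v) (g - cel)|
                + |inn μ pstar (g - cel)| := by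
                rw [sub_eq_add_neg]
                exact (abs_add_le _ _).trans (by rw [abs_neg])
            _ ≤ |inn μ (ch v) cel - inn μ pstar cel| + |inn μ (ch v) (g - cel)|
                + |inn μ pstar (g - cel)| := by
                have := abs_add_le (inn μ (ch v) cel - inn μ pstar cel) (inn μ (ch v) (g - cel))
                linarith
            _ ≤ ε/2 + ε/4 + ε/4 := by
                have b1 := hchInn.trans hcov4
                have b2 := hpsInn.trans hcov4
                linarith
            _ = ε := by ring
        · linarith
      -- probability of the good event
      have hPG : ENNReal.ofReal (1 - δ) ≤ prob (iid q n) G := by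
        apply OI.Aux.prob_ge_of_compl (iid q n) hδ0.le
        set Cfin : Finset (X → ℝ) := hCfin.toFinset with hCfinset
        have hcardN : Cfin.card = N := by
          have := hCfin.encard_eq_coe_toFinset_card
          rw [hNcard] at this
          exact_mod_cast this.symm
        set Ep : (X → ℝ) → Set (Fin n → X × Bool) := fun d =>
          {v | (n:ℝ) * (ε/4) ≤ ∑ i, (fd d (v i) - inn μ pstar d)} with hEp
        set En : (X → ℝ) → Set (Fin n → X × Bool) := fun d =>
          {v | (n:ℝ) * (ε/4) ≤ ∑ i, -(fd d (v i) - inn μ pstar d)} with hEn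
        have hcompl : Gᶜ ⊆ ⋃ d ∈ Cfin, (Ep d ∪ En d) := by
          intro v hv
          rw [Set.mem_compl_iff, hG, Set.mem_setOf_eq] at hv
          push_neg at hv
          obtain ⟨d, hd, hgt⟩ := hv
          refine Set.mem_biUnion ((Set.Finite.mem_toFinset hCfin).mpr hd) ?_
          have hsum : ∑ i, (fd d (v i) - inn μ pstar d) = Sm d v - (n:ℝ) * inn μ pstar d := by
            rw [Finset.sum_sub_distrib, Finset.sum_const, Finset.card_univ,
              Fintype.card_fin, nsmul_eq_mul, hSm]
          rcases lt_abs.mp hgt with h | h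
          · left
            rw [hEp]
            simp only [Set.mem_setOf_eq]
            rw [hsum]
            linarith
          · right
            rw [hEn]
            simp only [Set.mem_setOf_eq]
            rw [Finset.sum_neg_distrib, hsum]
            linarith
        set ee : ℝ := Real.exp (-(n:ℝ) * (ε/4)^2 / (2*2^2)) with hee
        have hterm : ∀ d ∈ Cfin, (iid q n).toOuterMeasure (Ep d ∪ En d)
            ≤ ENNReal.ofReal ee + ENNReal.ofReal ee := by
          intro d hd
          have hdC : d ∈ C := (Set.Finite.mem_toFinset hCfin).mp hd
          have hdD : d ∈ D := hC.1 hdC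
          have hdb : ∀ x, |d x| ≤ 1 := fun x => abs_le.mpr ⟨(hD d hdD x).1, (hD d hdD x).2⟩
          have hfdb : ∀ z : X × Bool, |fd d z| ≤ 1 := fun z => by
            rw [hfd]
            by_cases h : z.2 <;> simp [h, hdb _]
          have hmeanb : |inn μ pstar d| ≤ 1 := by
            have := OI.Aux.inn_abs_le μ zero_le_one zero_le_one hpsB hdb
            linarith
          have hmfd : pexp q (fd d) = inn μ pstar d := OI.Aux.mean_fd μ hpred hdb
          set gg : X × Bool → ℝ := fun z => fd d z - inn μ pstar d with hgg
          have hggb : ∀ z, |gg z| ≤ 2 := fun z => by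
            rw [hgg]
            simp only
            rw [sub_eq_add_neg]
            calc |fd d z + -(inn μ pstar d)| ≤ |fd d z| + |(-(inn μ pstar d))| := abs_add_le _ _
              _ ≤ 2 := by rw [abs_neg]; linarith [hfdb z]
          have hmean0 : pexp q gg = 0 := by
            rw [hgg]
            rw [OI.Aux.pexp_sub q (B := 1) (C := 1) hfdb (fun z => hmeanb)]
            rw [hmfd, OI.Aux.pexp_const, sub_self]
          have hggnb : ∀ z, |(-(gg z))| ≤ 2 := fun z => by rw [abs_neg]; exact hggb z
          have hmeann0 : pexp q (fun z => -(gg z)) = 0 := by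
            have : (fun z => -(gg z)) = fun z => (-1) * gg z := by funext z; ring
            rw [this, OI.Aux.pexp_smul, hmean0, mul_zero]
          have ht4 : (0:ℝ) < ε/4 := by linarith
          have hch1 := OI.Aux.chernoff q (B := 2) two_pos hggb hmean0 ht4 n
          have hch2 := OI.Aux.chernoff q (B := 2) two_pos (g := fun z => -(gg z))
            hggnb hmeann0 ht4 n
          have hEp1 : Ep d = {v : Fin n → X × Bool | (n:ℝ) * (ε/4) ≤ ∑ i, gg (v i)} := rfl
          have hEn1 : En d = {v : Fin n → X × Bool |
              (n:ℝ) * (ε/4) ≤ ∑ i, (fun z => -(gg z)) (v i)} := rfl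
          calc (iid q n).toOuterMeasure (Ep d ∪ En d)
              ≤ (iid q n).toOuterMeasure (Ep d) + (iid q n).toOuterMeasure (En d) :=
                MeasureTheory.measure_union_le (μ := (iid q n).toOuterMeasure) _ _
            _ ≤ ENNReal.ofReal ee + ENNReal.ofReal ee := by
                rw [hEp1, hEn1]
                exact add_le_add hch1 hch2
        have hfinal : prob (iid q n) Gᶜ ≤ ENNReal.ofReal δ := by
          refine (OI.Aux.prob_mono _ hcompl).trans ?_
          refine (MeasureTheory.measure_biUnion_finset_le
            (μ := (iid q n).toOuterMeasure) Cfin _).trans ?_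
          have hsum1 : ∑ d ∈ Cfin, (iid q n).toOuterMeasure (Ep d ∪ En d)
              ≤ ∑ _d ∈ Cfin, (ENNReal.ofReal ee + ENNReal.ofReal ee) :=
            Finset.sum_le_sum hterm
          refine hsum1.trans ?_
          rw [Finset.sum_const, hcardN]
          have hee0 : 0 ≤ ee := Real.exp_nonneg _
          have heq : (ENNReal.ofReal ee + ENNReal.ofReal ee) = ENNReal.ofReal (2*ee) := by
            rw [← ENNReal.ofReal_add hee0 hee0]
            congr 1
            ring
          rw [heq]
          rw [nsmul_eq_mul]
          rw [show ((N:ℕ) : ℝ≥0∞) = ENNReal.ofReal (N:ℝ) by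
            rw [ENNReal.ofReal_natCast]]
          rw [← ENNReal.ofReal_mul (by positivity)]
          apply ENNReal.ofReal_le_ofReal
          -- (N:ℝ) * (2 * ee) ≤ δ
          have hexp : ee ≤ δ / (2*(N:ℝ)) := by
            rw [hee]
            have harg : -(n:ℝ) * (ε/4)^2 / (2*2^2) ≤ -Real.log (2*(N:ℝ)/δ) := by
              have hyn : 128 * ε⁻¹^2 * Real.log (2*(N:ℝ)/δ) ≤ (n:ℝ) := hny
              have hε2 : (0:ℝ) < ε^2 := by positivity
              have hinv : ε⁻¹^2 * ε^2 = 1 := by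
                field_simp
              nlinarith [mul_le_mul_of_nonneg_right hyn hε2.le]
            calc Real.exp (-(n:ℝ) * (ε/4)^2 / (2*2^2))
                ≤ Real.exp (-Real.log (2*(N:ℝ)/δ)) := Real.exp_le_exp.mpr harg
              _ = (2*(N:ℝ)/δ)⁻¹ := by rw [Real.exp_neg, Real.exp_log hNδpos]
              _ = δ / (2*(N:ℝ)) := by
                  rw [inv_div]
            
          calc (N:ℝ) * (2 * ee) ≤ (N:ℝ) * (2 * (δ / (2*(N:ℝ)))) := by
                have hN0 : (0:ℝ) ≤ (N:ℝ) := by linarith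
                nlinarith
            _ = δ := by
                field_simp
        exact hfinal
      exact hPG.trans (OI.Aux.prob_mono _ hsub)
end
end

section
/- Assume the distinguisher class D ⊆ [−1,1]^X satisfies {−1,1}^X ⊆ D. For every predictor class P ⊆ [0,1]^X, every distribution μ over X, every advantage bound ε ∈ (0,1), and every failure probability bound δ ∈ (0,1), there exist a positive integer n with n = O( ( log N_{μ,D}(P, ε/2) + log(2/δ) ) / ε² ) and an n-sample learner such that for every target predictor p* ∈ [0,1]^X with the property that P ⊆ {0,1}^X or p* ∈ {0,1}^X, given n i.i.d. examples from μ_{p*}, the learner outputs a predictor p with ‖p − p*‖_{μ,D} ≤ inf_{p'∈P} ‖p' − p*‖_{μ,D} + ε with probability at least 1 − δ. -/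
open scoped ENNReal Pointwise

noncomputable section

open OI

open scoped Classical
section AuxOI

namespace OIaux

/-- ENNReal expectation. -/
noncomputable def ee {α : Type*} (q : PMF α) (g : α → ℝ≥0∞) : ℝ≥0∞ := ∑' a, q a * g a

lemma ee_mono {α : Type*} (q : PMF α) {g h : α → ℝ≥0∞} (hgh : ∀ a, g a ≤ h a) :
    ee q g ≤ ee q h :=
  ENNReal.tsum_le_tsum fun a => mul_le_mul_right (hgh a) _

lemma ee_const {α : Type*} (q : PMF α) (c : ℝ≥0∞) : ee q (fun _ => c) = c := by
  simp [ee, ENNReal.tsum_mul_right, q.tsum_coe]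

lemma ee_bind {α β : Type*} (q : PMF α) (k : α → PMF β) (g : β → ℝ≥0∞) :
    ee (q.bind k) g = ∑' a, q a * ee (k a) g := by
  simp only [ee, PMF.bind_apply]
  rw [tsum_congr (fun b => (ENNReal.tsum_mul_right (f := fun a => q a * (k a) b)).symm)]
  rw [ENNReal.tsum_comm]
  congr 1; ext a
  rw [← ENNReal.tsum_mul_left]
  congr 1; ext b; ring

lemma ee_pure {α : Type*} (a : α) (g : α → ℝ≥0∞) : ee (PMF.pure a) g = g a := by
  simp only [ee, PMF.pure_apply]
  rw [show (fun a' => (if a' = a then (1:ℝ≥0∞) else 0) * g a') = fun a' => if a' = a then g a else 0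
    from funext fun a' => by split <;> simp_all]
  exact tsum_ite_eq a (fun _ => g a)

lemma ee_map {α β : Type*} (q : PMF α) (h : α → β) (g : β → ℝ≥0∞) :
    ee (q.map h) g = ee q (fun a => g (h a)) := by
  rw [PMF.map, ee_bind]
  simp only [Function.comp, ee_pure]
  rfl

lemma ee_mul_const {α : Type*} (q : PMF α) (g : α → ℝ≥0∞) (c : ℝ≥0∞) :
    ee q (fun a => g a * c) = ee q g * c := by
  simp only [ee, ← ENNReal.tsum_mul_right, mul_assoc]

lemma ee_const_mul {α : Type*} (q : PMF α) (g : α → ℝ≥0∞) (c : ℝ≥0∞) :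
    ee q (fun a => c * g a) = c * ee q g := by
  simp only [mul_comm c, ee_mul_const]

lemma prob_eq_ee {α : Type*} (q : PMF α) (E : Set α) :
    q.toOuterMeasure E = ee q (E.indicator fun _ => 1) := by
  rw [PMF.toOuterMeasure_apply]
  congr 1; ext a
  by_cases h : a ∈ E <;> simp [ee, Set.indicator, h]

lemma markov {α : Type*} (q : PMF α) (g : α → ℝ≥0∞) (E : Set α) (c : ℝ≥0∞)
    (hE : ∀ a ∈ E, c ≤ g a) : c * q.toOuterMeasure E ≤ ee q g := by
  rw [prob_eq_ee, ← ee_const_mul]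
  refine ee_mono q fun a => ?_
  by_cases h : a ∈ E <;> simp [Set.indicator, h]
  exact hE a h

end OIaux

open OIaux

section Real
variable {α : Type*} (q : PMF α)

lemma summable_w : Summable fun a => (q a).toReal :=
  ENNReal.summable_toReal (by rw [q.tsum_coe]; exact ENNReal.one_ne_top)

lemma tsum_w : ∑' a, (q a).toReal = 1 := by
  rw [← ENNReal.tsum_toReal_eq fun a => (q.apply_lt_top a).ne]
  simp [q.tsum_coe]

lemma summable_wf {f : α → ℝ} {B : ℝ} (hB : ∀ a, |f a| ≤ B) :
    Summable fun a => (q a).toReal * f a := by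
  refine Summable.of_abs (Summable.of_nonneg_of_le (fun a => abs_nonneg _) (fun a => ?_)
    ((summable_w q).mul_right B))
  rw [abs_mul, abs_of_nonneg ENNReal.toReal_nonneg]
  exact mul_le_mul_of_nonneg_left (hB a) ENNReal.toReal_nonneg

lemma pexp_mono {f g : α → ℝ} {Bf Bg : ℝ} (hBf : ∀ a, |f a| ≤ Bf) (hBg : ∀ a, |g a| ≤ Bg)
    (h : ∀ a, f a ≤ g a) : pexp q f ≤ pexp q g :=
  Summable.tsum_le_tsum (fun a => mul_le_mul_of_nonneg_left (h a) ENNReal.toReal_nonneg)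
    (summable_wf q hBf) (summable_wf q hBg)

lemma pexp_const (c : ℝ) : pexp q (fun _ => c) = c := by
  unfold OI.pexp
  rw [tsum_mul_right, tsum_w]
  ring

lemma pexp_nonneg {f : α → ℝ} (hf : ∀ a, 0 ≤ f a) : 0 ≤ pexp q f :=
  tsum_nonneg fun a => mul_nonneg ENNReal.toReal_nonneg (hf a)

lemma pexp_le_const {f : α → ℝ} {B : ℝ} (hf : ∀ a, f a ≤ B) (hf0 : ∀ a, 0 ≤ f a) :
    pexp q f ≤ B := by
  have := pexp_mono q (f := f) (g := fun _ => B) (Bf := B) (Bg := |B|)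
    (fun a => by rw [abs_of_nonneg (hf0 a)]; exact hf a)
    (fun a => le_rfl) hf
  rwa [pexp_const] at this

lemma pexp_add {f g : α → ℝ} {Bf Bg : ℝ} (hBf : ∀ a, |f a| ≤ Bf) (hBg : ∀ a, |g a| ≤ Bg) :
    pexp q (fun a => f a + g a) = pexp q f + pexp q g := by
  unfold OI.pexp
  rw [← Summable.tsum_add (summable_wf q hBf) (summable_wf q hBg)]
  congr 1; ext a; ring

lemma pexp_sub {f g : α → ℝ} {Bf Bg : ℝ} (hBf : ∀ a, |f a| ≤ Bf) (hBg : ∀ a, |g a| ≤ Bg) :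
    pexp q (fun a => f a - g a) = pexp q f - pexp q g := by
  unfold OI.pexp
  rw [← Summable.tsum_sub (summable_wf q hBf) (summable_wf q hBg)]
  congr 1; ext a; ring

lemma pexp_smul (c : ℝ) (f : α → ℝ) : pexp q (fun a => c * f a) = c * pexp q f := by
  unfold OI.pexp
  rw [← tsum_mul_left]
  congr 1; ext a; ring

/-- conversion: real expectation of a nonneg bounded function as `toReal` of `ee`. -/
lemma ee_ofReal {f : α → ℝ} {B : ℝ} (hf0 : ∀ a, 0 ≤ f a) (hB : ∀ a, f a ≤ B) :
    ee q (fun a => ENNReal.ofReal (f a)) = ENNReal.ofReal (pexp q f) := by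
  unfold ee OI.pexp
  rw [ENNReal.ofReal_tsum_of_nonneg (fun a => mul_nonneg ENNReal.toReal_nonneg (hf0 a))
    (summable_wf q (B := B) (fun a => by rw [abs_of_nonneg (hf0 a)]; exact hB a))]
  congr 1; ext a
  rw [ENNReal.ofReal_mul ENNReal.toReal_nonneg, ENNReal.ofReal_toReal (q.apply_lt_top a).ne]

lemma pexp_eq_toReal_ee {f : α → ℝ} {B : ℝ} (hf0 : ∀ a, 0 ≤ f a) (hB : ∀ a, f a ≤ B) :
    pexp q f = (ee q (fun a => ENNReal.ofReal (f a))).toReal := by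
  rw [ee_ofReal q hf0 hB, ENNReal.toReal_ofReal (pexp_nonneg q hf0)]

end Real


section IID
variable {α : Type*} (q : PMF α)

lemma ee_iid_prod (h : α → ℝ≥0∞) : ∀ n : ℕ,
    ee (OI.iid q n) (fun s => ∏ i, h (s i)) = (ee q h) ^ n := by
  intro n
  induction n with
  | zero => rw [OI.iid, ee_pure]; simp
  | succ n ih =>
    rw [OI.iid, ee_bind]
    have step : ∀ v : Fin n → α,
        ee (q.map fun a => Fin.cons a v) (fun s => ∏ i, h (s i))
          = ee q h * ∏ i, h (v i) := by
      intro v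
      rw [ee_map]
      have : ∀ a, (∏ i, h (Fin.cons a v i)) = h a * ∏ i, h (v i) := by
        intro a
        rw [Fin.prod_univ_succ]
        simp [Fin.cons_succ]
      simp only [this]
      rw [ee_mul_const]
    simp only [step]
    have : ∀ v : Fin n → α, q.toOuterMeasure Set.univ = 1 := fun _ => by
      rw [PMF.toOuterMeasure_apply]; simp [q.tsum_coe]
    calc (∑' v, (OI.iid q n) v * (ee q h * ∏ i, h (v i)))
        = ee q h * ee (OI.iid q n) (fun v => ∏ i, h (v i)) := by
          unfold ee; rw [← ENNReal.tsum_mul_left]; congr 1; ext v; ring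
      _ = ee q h ^ (n + 1) := by rw [ih]; ring

/-- One-sided Chernoff bound for `[0,1]`-valued iid sums. -/
lemma chernoff (f : α → ℝ) (hf : ∀ a, f a ∈ Set.Icc (0:ℝ) 1) (n : ℕ) {ε : ℝ}
    (hε : 0 < ε) (hε1 : ε ≤ 1) :
    (OI.iid q n).toOuterMeasure {s | (n : ℝ) * ε ≤ ∑ i, (f (s i) - pexp q f)} ≤
      ENNReal.ofReal (Real.exp (-(n : ℝ) * ε ^ 2 / 4)) := by
  set m := pexp q f with hm
  have hm0 : 0 ≤ m := pexp_nonneg q fun a => (hf a).1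
  have hm1 : m ≤ 1 := pexp_le_const q (fun a => (hf a).2) (fun a => (hf a).1)
  set t : ℝ := ε / 2 with ht
  have ht0 : 0 < t := by positivity
  have ht1 : t ≤ 1 := by rw [ht]; linarith
  have hY : ∀ a, |f a - m| ≤ 1 := by
    intro a; rw [abs_le]; constructor <;> nlinarith [(hf a).1, (hf a).2]
  have hY1 : ∀ a, |t * (f a - m)| ≤ 1 := by
    intro a
    rw [abs_mul, abs_of_pos ht0]
    nlinarith [hY a, abs_nonneg (f a - m)]
  have hsingle : ee q (fun a => ENNReal.ofReal (Real.exp (t * (f a - m)))) ≤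
      ENNReal.ofReal (Real.exp (t ^ 2)) := by
    have hb : ∀ a, Real.exp (t * (f a - m)) ≤ 1 + t * (f a - m) + t ^ 2 * (f a - m) ^ 2 := by
      intro a
      have := Real.exp_bound (hY1 a) (n := 2) (by norm_num)
      have h2 : |Real.exp (t * (f a - m)) - (1 + t * (f a - m))| ≤
          |t * (f a - m)| ^ 2 * (3 / 4) := by
        convert this using 2
        · simp [Finset.sum_range_succ]
        · norm_num
      have h3 : |t * (f a - m)| ^ 2 = t ^ 2 * (f a - m) ^ 2 := by
        rw [abs_mul, mul_pow, sq_abs, sq_abs]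
      rw [h3] at h2
      have h4 := le_abs_self (Real.exp (t * (f a - m)) - (1 + t * (f a - m)))
      nlinarith [sq_nonneg (t * (f a - m))]
    have hEboundfn : ∀ a, Real.exp (t * (f a - m)) ≤ Real.exp 1 := fun a =>
      Real.exp_le_exp.2 (le_trans (le_abs_self _) (hY1 a))
    rw [ee_ofReal q (fun a => (Real.exp_pos _).le) hEboundfn]
    refine ENNReal.ofReal_le_ofReal ?_
    have hbound1 : ∀ a, |1 + t * (f a - m)| ≤ 2 := by
      intro a
      have := abs_le.1 (hY1 a)
      rw [abs_le]; constructor <;> linarith [this.1, this.2]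
    have hbound2 : ∀ a, |t ^ 2 * (f a - m) ^ 2| ≤ 1 := by
      intro a
      have h3 : t ^ 2 * (f a - m) ^ 2 = |t * (f a - m)| ^ 2 := by
        rw [abs_mul, mul_pow, sq_abs, sq_abs]
      rw [abs_le]; constructor <;> nlinarith [hY1 a, abs_nonneg (t * (f a - m))]
    have hbexp : ∀ a, |Real.exp (t * (f a - m))| ≤ Real.exp 1 := fun a => by
      rw [abs_of_pos (Real.exp_pos _)]; exact hEboundfn a
    have hq : pexp q (fun a => Real.exp (t * (f a - m))) ≤
        pexp q (fun a => 1 + t * (f a - m) + t ^ 2 * (f a - m) ^ 2) := by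
      refine pexp_mono q (Bf := Real.exp 1) (Bg := 3) hbexp ?_ hb
      intro a
      calc |1 + t * (f a - m) + t ^ 2 * (f a - m) ^ 2|
          ≤ |1 + t * (f a - m)| + |t ^ 2 * (f a - m) ^ 2| := abs_add_le _ _
        _ ≤ 3 := by linarith [hbound1 a, hbound2 a]
    have e1 : pexp q (fun a => 1 + t * (f a - m) + t ^ 2 * (f a - m) ^ 2) =
        pexp q (fun a => 1 + t * (f a - m)) + pexp q (fun a => t ^ 2 * (f a - m) ^ 2) :=
      pexp_add q (Bf := 2) (Bg := 1) hbound1 hbound2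
    have e2 : pexp q (fun a => 1 + t * (f a - m)) =
        pexp q (fun _ => (1:ℝ)) + pexp q (fun a => t * (f a - m)) :=
      pexp_add q (Bf := 1) (Bg := 1) (fun a => by norm_num) hY1
    have e3 : pexp q (fun a => t * (f a - m)) = t * pexp q (fun a => f a - m) :=
      pexp_smul q t _
    have e4 : pexp q (fun a => t ^ 2 * (f a - m) ^ 2) = t ^ 2 * pexp q (fun a => (f a - m) ^ 2) :=
      pexp_smul q (t ^ 2) _
    have hzero : pexp q (fun a => f a - m) = 0 := by
      rw [pexp_sub q (Bf := 1) (Bg := 1)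
          (fun a => by rw [abs_of_nonneg (hf a).1]; exact (hf a).2)
          (fun a => by rw [abs_of_nonneg hm0]; exact hm1), pexp_const]
      rw [← hm]; ring
    have hsq : pexp q (fun a => (f a - m) ^ 2) ≤ 1 :=
      pexp_le_const q (fun a => by nlinarith [hY a, sq_abs (f a - m), abs_nonneg (f a - m)]) (fun a => sq_nonneg _)
    have hone : pexp q (fun _ => (1:ℝ)) = 1 := pexp_const q 1
    have hfin : pexp q (fun a => Real.exp (t * (f a - m))) ≤ 1 + t ^ 2 := by
      rw [e1, e2, e3, e4, hzero, hone] at hq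
      nlinarith [sq_nonneg t]
    have := Real.add_one_le_exp (t ^ 2)
    linarith
  -- product bound
  have hprod : ee (OI.iid q n) (fun s => ENNReal.ofReal (Real.exp (t * ∑ i, (f (s i) - m)))) ≤
      ENNReal.ofReal (Real.exp ((n : ℝ) * t ^ 2)) := by
    have heq : ∀ s : Fin n → α, ENNReal.ofReal (Real.exp (t * ∑ i, (f (s i) - m))) =
        ∏ i, ENNReal.ofReal (Real.exp (t * (f (s i) - m))) := by
      intro s
      rw [Finset.mul_sum, Real.exp_sum, ← ENNReal.ofReal_prod_of_nonneg]
      intro i _; exact (Real.exp_pos _).le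
    simp only [heq]
    rw [ee_iid_prod q (fun a => ENNReal.ofReal (Real.exp (t * (f a - m)))) n]
    calc (ee q (fun a => ENNReal.ofReal (Real.exp (t * (f a - m))))) ^ n
        ≤ (ENNReal.ofReal (Real.exp (t ^ 2))) ^ n := pow_le_pow_left' hsingle n
      _ = ENNReal.ofReal (Real.exp ((n : ℝ) * t ^ 2)) := by
          rw [Real.exp_nat_mul, ENNReal.ofReal_pow (Real.exp_pos _).le]
  -- markov
  have hmk := markov (OI.iid q n)
    (fun s => ENNReal.ofReal (Real.exp (t * ∑ i, (f (s i) - m))))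
    {s | (n : ℝ) * ε ≤ ∑ i, (f (s i) - m)}
    (ENNReal.ofReal (Real.exp (t * ((n : ℝ) * ε))))
    (fun s hs => ENNReal.ofReal_le_ofReal (Real.exp_le_exp.2
      (mul_le_mul_of_nonneg_left hs ht0.le)))
  have hle := hmk.trans hprod
  have hc0 : (ENNReal.ofReal (Real.exp (t * ((n : ℝ) * ε)))) ≠ 0 := by
    simp [Real.exp_pos]
  have hct : (ENNReal.ofReal (Real.exp (t * ((n : ℝ) * ε)))) ≠ ⊤ := ENNReal.ofReal_ne_top
  have hdiv := (ENNReal.le_div_iff_mul_le (Or.inl hc0) (Or.inl hct)).2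
    ((mul_comm _ _).trans_le hle)
  calc (OI.iid q n).toOuterMeasure {s | (n : ℝ) * ε ≤ ∑ i, (f (s i) - m)}
      ≤ ENNReal.ofReal (Real.exp ((n : ℝ) * t ^ 2)) /
          ENNReal.ofReal (Real.exp (t * ((n : ℝ) * ε))) := hdiv
    _ = ENNReal.ofReal (Real.exp ((n : ℝ) * t ^ 2) / Real.exp (t * ((n : ℝ) * ε))) := by
        rw [ENNReal.ofReal_div_of_pos (Real.exp_pos _)]
    _ = ENNReal.ofReal (Real.exp ((n : ℝ) * t ^ 2 - t * ((n : ℝ) * ε))) := by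
        rw [Real.exp_sub]
    _ = ENNReal.ofReal (Real.exp (-(n : ℝ) * ε ^ 2 / 4)) := by
        congr 2; rw [ht]; ring

end IID


section Dnorm
variable {X : Type*} (μ : PMF X) (D : Set (X → ℝ))

lemma inn_abs_le_s15 {h d : X → ℝ} (hd : OI.Dist1 d) (hh : ∀ x, |h x| ≤ 1) :
    |OI.inn μ h d| ≤ pexp μ (fun x => |h x|) := by
  unfold OI.inn OI.pexp
  have h1 : ∀ x, |(μ x).toReal * (h x * d x)| ≤ (μ x).toReal * |h x| := by
    intro x
    rw [abs_mul, abs_of_nonneg ENNReal.toReal_nonneg, abs_mul]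
    refine mul_le_mul_of_nonneg_left ?_ ENNReal.toReal_nonneg
    have := abs_le.2 ⟨(hd x).1, (hd x).2⟩
    nlinarith [abs_nonneg (h x), abs_nonneg (d x)]
  have hs1 : Summable fun x => (μ x).toReal * (h x * d x) := by
    refine summable_wf μ (B := 1) fun x => ?_
    rw [abs_mul]
    have hd1 := abs_le.2 ⟨(hd x).1, (hd x).2⟩
    nlinarith [abs_nonneg (h x), abs_nonneg (d x), hh x]
  have hs2 : Summable fun x => (μ x).toReal * |h x| :=
    summable_wf μ (B := 1) fun x => by rw [abs_abs]; exact hh x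
  calc |∑' x, (μ x).toReal * (h x * d x)| ≤ ∑' x, |(μ x).toReal * (h x * d x)| :=
        by simp only [← Real.norm_eq_abs]; exact norm_tsum_le_tsum_norm hs1.abs
    _ ≤ ∑' x, (μ x).toReal * |h x| := Summable.tsum_le_tsum h1 hs1.abs hs2

lemma dnorm_le_L1 (hD : ∀ d ∈ D, OI.Dist1 d) (hDne : D.Nonempty) {h : X → ℝ}
    (hh : ∀ x, |h x| ≤ 1) : OI.dnorm μ D h ≤ pexp μ (fun x => |h x|) := by
  refine Real.sSup_le ?_ (pexp_nonneg μ fun x => abs_nonneg _)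
  rintro y ⟨d, hd, rfl⟩
  exact inn_abs_le_s15 μ (hD d hd) hh

lemma L1_le_dnorm (hsgn : {d : X → ℝ | ∀ x, d x = 1 ∨ d x = -1} ⊆ D)
    (hD : ∀ d ∈ D, OI.Dist1 d) {h : X → ℝ} (hh : ∀ x, |h x| ≤ 1) :
    pexp μ (fun x => |h x|) ≤ OI.dnorm μ D h := by
  set g : X → ℝ := fun x => if 0 ≤ h x then 1 else -1 with hg
  have hgD : g ∈ D := hsgn fun x => by by_cases h0 : 0 ≤ h x <;> simp [hg, h0]
  have hinn : OI.inn μ h g = pexp μ (fun x => |h x|) := by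
    unfold OI.inn
    congr 1; ext x
    by_cases h0 : 0 ≤ h x
    · simp [hg, h0, abs_of_nonneg h0]
    · simp [hg, h0, abs_of_neg (lt_of_not_ge h0)]
  have hmem : |OI.inn μ h g| ∈ (fun g => |OI.inn μ h g|) '' D := ⟨g, hgD, rfl⟩
  have hbdd : BddAbove ((fun g => |OI.inn μ h g|) '' D) := by
    refine ⟨pexp μ (fun x => |h x|), ?_⟩
    rintro y ⟨d, hd, rfl⟩
    exact inn_abs_le_s15 μ (hD d hd) hh
  calc pexp μ (fun x => |h x|) = |OI.inn μ h g| := by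
        rw [hinn, abs_of_nonneg (pexp_nonneg μ fun x => abs_nonneg _)]
    _ ≤ OI.dnorm μ D h := le_csSup hbdd hmem
end Dnorm

section Risk
variable {X : Type*} (μ : PMF X)

/-- the per-example loss -/
noncomputable def phiF (c : X → ℝ) : X × Bool → ℝ := fun z => |c z.1 - (if z.2 then (1:ℝ) else 0)|

lemma phiF_mem (c : X → ℝ) (hc : OI.Predictor c) (z : X × Bool) :
    phiF c z ∈ Set.Icc (0:ℝ) 1 := by
  refine ⟨abs_nonneg _, ?_⟩
  rcases z with ⟨x, o⟩
  have h0 := (hc x).1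
  have h1 := (hc x).2
  cases o
  · show |c x - 0| ≤ 1
    rw [sub_zero, abs_le]; exact ⟨by linarith, by linarith⟩
  · show |c x - 1| ≤ 1
    rw [abs_le]; exact ⟨by linarith, by linarith⟩

/-- the key identity: expected loss equals L1 distance, in the binary case -/
lemma risk_eq_L1 (c pstar : X → ℝ) (hc : OI.Predictor c) (hp : OI.Predictor pstar)
    (hbin : (∀ x, c x = 0 ∨ c x = 1) ∨ (∀ x, pstar x = 0 ∨ pstar x = 1)) :
    pexp (OI.exDist μ pstar) (phiF c) = pexp μ (fun x => |c x - pstar x|) := by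
  have habs : ∀ x, |c x - pstar x| ≤ 1 := by
    intro x
    rw [abs_le]
    constructor <;> nlinarith [(hc x).1, (hc x).2, (hp x).1, (hp x).2]
  have hstep : ∀ x, ee ((OI.bern (pstar x)).map (fun o => (x, o)))
      (fun z => ENNReal.ofReal (phiF c z)) = ENNReal.ofReal |c x - pstar x| := by
    intro x
    rw [ee_map]
    unfold ee OI.bern
    rw [tsum_bool]
    have hmin : ((min (Real.toNNReal (pstar x)) 1 : NNReal) : ℝ≥0∞) = ENNReal.ofReal (pstar x) := by
      rw [min_eq_left (Real.toNNReal_le_one.2 (hp x).2)]; rfl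
    simp only [PMF.bernoulli_apply, ENNReal.coe_sub, ENNReal.coe_one, hmin, cond_false, cond_true]
    have h1m : 1 - ENNReal.ofReal (pstar x) = ENNReal.ofReal (1 - pstar x) := by
      rw [ENNReal.ofReal_sub 1 (hp x).1, ENNReal.ofReal_one]
    have hphif : phiF c (x, false) = |c x| := by simp [phiF]
    have hphit : phiF c (x, true) = |c x - 1| := by simp [phiF]
    rw [hphif, hphit, h1m, ← ENNReal.ofReal_mul (by linarith [(hp x).2]),
      ← ENNReal.ofReal_mul (hp x).1,
      ← ENNReal.ofReal_add (mul_nonneg (by linarith [(hp x).2]) (abs_nonneg _))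
        (mul_nonneg (hp x).1 (abs_nonneg _))]
    congr 1
    have hc0 := (hc x).1; have hc1 := (hc x).2
    have hp0 := (hp x).1; have hp1 := (hp x).2
    have habs0 : |c x| = c x := abs_of_nonneg hc0
    have habs1 : |c x - 1| = 1 - c x := by rw [abs_of_nonpos (by linarith)]; ring
    rw [habs0, habs1]
    rcases hbin with hb | hb
    · rcases hb x with h0 | h0 <;> rw [h0]
      · rw [abs_of_nonpos (by linarith)]; ring
      · rw [abs_of_nonneg (by linarith)]; ring
    · rcases hb x with h0 | h0 <;> rw [h0]
      · rw [abs_of_nonneg (by linarith)]; ring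
      · rw [abs_of_nonpos (by linarith)]; ring
  have key : ee (OI.exDist μ pstar) (fun z => ENNReal.ofReal (phiF c z)) =
      ee μ (fun x => ENNReal.ofReal |c x - pstar x|) := by
    unfold OI.exDist
    rw [ee_bind]
    simp only [hstep]
    rfl
  rw [pexp_eq_toReal_ee (OI.exDist μ pstar) (B := 1) (fun z => (phiF_mem c hc z).1)
      (fun z => (phiF_mem c hc z).2),
    pexp_eq_toReal_ee μ (B := 1) (fun x => abs_nonneg _) habs, key]

end Risk

section Union
variable {σ : Type*} (q : PMF σ)

lemma prob_mono {s t : Set σ} (h : s ⊆ t) : q.toOuterMeasure s ≤ q.toOuterMeasure t :=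
  q.toOuterMeasure.mono h

lemma prob_univ : q.toOuterMeasure Set.univ = 1 := by
  rw [PMF.toOuterMeasure_apply]
  simp [q.tsum_coe]

lemma prob_union_le (s t : Set σ) :
    q.toOuterMeasure (s ∪ t) ≤ q.toOuterMeasure s + q.toOuterMeasure t :=
  MeasureTheory.measure_union_le s t

lemma prob_finset_union {ι : Type*} (C : Finset ι) (E : ι → Set σ) :
    q.toOuterMeasure {s | ∃ c ∈ C, s ∈ E c} ≤ ∑ c ∈ C, q.toOuterMeasure (E c) := by
  classical
  induction C using Finset.induction with
  | empty => simp [show {s : σ | ∃ c ∈ (∅ : Finset ι), s ∈ E c} = ∅ by ext s; simp]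
  | insert a C hni ih =>
    have hsub : {s : σ | ∃ c ∈ insert a C, s ∈ E c} ⊆ E a ∪ {s | ∃ c ∈ C, s ∈ E c} := by
      rintro s ⟨c, hcC, hsc⟩
      rcases Finset.mem_insert.1 hcC with rfl | hC
      · exact Or.inl hsc
      · exact Or.inr ⟨c, hC, hsc⟩
    calc q.toOuterMeasure {s | ∃ c ∈ insert a C, s ∈ E c}
        ≤ q.toOuterMeasure (E a ∪ {s | ∃ c ∈ C, s ∈ E c}) := prob_mono q hsub
      _ ≤ q.toOuterMeasure (E a) + q.toOuterMeasure {s | ∃ c ∈ C, s ∈ E c} :=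
          prob_union_le q _ _
      _ ≤ q.toOuterMeasure (E a) + ∑ c ∈ C, q.toOuterMeasure (E c) := by
          exact add_le_add_right ih _
      _ = ∑ c ∈ insert a C, q.toOuterMeasure (E c) := by rw [Finset.sum_insert hni]

lemma prob_compl_bound {Good Bad : Set σ} (hGB : Goodᶜ ⊆ Bad) {δ : ℝ} (hδ0 : 0 ≤ δ)
    (hδ1 : δ ≤ 1) (hB : q.toOuterMeasure Bad ≤ ENNReal.ofReal δ) :
    ENNReal.ofReal (1 - δ) ≤ q.toOuterMeasure Good := by
  have huniv : (Set.univ : Set σ) ⊆ Good ∪ Bad := by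
    intro s _
    by_cases h : s ∈ Good
    · exact Or.inl h
    · exact Or.inr (hGB h)
  have h1 : (1 : ℝ≥0∞) ≤ q.toOuterMeasure Good + ENNReal.ofReal δ := by
    calc (1 : ℝ≥0∞) = q.toOuterMeasure Set.univ := (prob_univ q).symm
      _ ≤ q.toOuterMeasure (Good ∪ Bad) := prob_mono q huniv
      _ ≤ q.toOuterMeasure Good + q.toOuterMeasure Bad := prob_union_le q _ _
      _ ≤ q.toOuterMeasure Good + ENNReal.ofReal δ := add_le_add_right hB _
  have h2 : ENNReal.ofReal (1 - δ) + ENNReal.ofReal δ = 1 := by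
    rw [← ENNReal.ofReal_add (by linarith) hδ0]
    norm_num
  rw [← ENNReal.add_le_add_iff_right (@ENNReal.ofReal_ne_top δ), h2]
  exact h1

end Union

lemma enat_lt_add_one {m n : ℕ∞} (h : n ≠ ⊤) : m < n + 1 ↔ m ≤ n :=
  Order.lt_add_one_iff_of_not_isMax (by simp [h, isMax_iff_eq_top])

lemma sum_sub_const {n : ℕ} (g : Fin n → ℝ) (r : ℝ) :
    ∑ i, (g i - r) = (∑ i, g i) - (n : ℝ) * r := by
  rw [Finset.sum_sub_distrib, Finset.sum_const, Finset.card_univ, Fintype.card_fin,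
    nsmul_eq_mul]

end AuxOI

set_option maxHeartbeats 2000000

/-- agnostic learning with `ℓ₁`-type distinguishers (`{−1,1}^X ⊆ D`) when either
`P` consists of binary classifiers or the target is a binary classifier: ERM with
`n = O((log N_{μ,D}(P,ε/2) + log(2/δ))/ε²)` samples outputs `p` with
`‖p − p*‖_{μ,D} ≤ inf_{p'∈P}‖p' − p*‖_{μ,D} + ε` with probability at least `1 − δ`. -/
theorem statement_15 :
    ∃ c : ℝ, 0 < c ∧
      ∀ (X : Type) (_ : Nonempty X) (μ : PMF X) (P D : Set (X → ℝ)),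
        P.Nonempty → (∀ p ∈ P, Predictor p) →
        (∀ d ∈ D, Dist1 d) → {d : X → ℝ | ∀ x, d x = 1 ∨ d x = -1} ⊆ D →
        ∀ ε δ : ℝ, ε ∈ Set.Ioo (0 : ℝ) 1 → δ ∈ Set.Ioo (0 : ℝ) 1 →
          covN μ D P (ε / 2) ≠ ⊤ →
            ∃ n : ℕ, 0 < n ∧
              (n : ℝ) ≤ c * (elog2 (covN μ D P (ε / 2)) + Real.logb 2 (2 / δ)) / ε ^ 2 ∧
              ∃ A : Learner X n, ∀ pstar : X → ℝ, Predictor pstar →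
                ((∀ p ∈ P, ∀ x, p x = 0 ∨ p x = 1) ∨ (∀ x, pstar x = 0 ∨ pstar x = 1)) →
                  AchievesAg μ P D ε δ pstar A := by
  classical
  refine ⟨1000, by norm_num, ?_⟩
  intro X _hX μ P D hPne hP hD hsgn ε δ hε hδ hcov
  obtain ⟨hε0, hε1⟩ := hε
  obtain ⟨hδ0, hδ1⟩ := hδ
  -- extract a near-minimal finite cover
  have hlt : covN μ D P (ε / 2) < covN μ D P (ε / 2) + 1 :=
    (enat_lt_add_one hcov).2 le_rfl
  obtain ⟨C₀, hlt⟩ := iInf_lt_iff.1 hlt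
  obtain ⟨hC₀, hlt⟩ := iInf_lt_iff.1 hlt
  have hle : C₀.encard ≤ covN μ D P (ε / 2) := (enat_lt_add_one hcov).1 hlt
  have hfin : C₀.Finite :=
    Set.encard_ne_top_iff.1 (fun h => hcov (top_le_iff.1 (h ▸ hle)))
  set C : Finset (X → ℝ) := hfin.toFinset with hCdef
  have hCsub : ∀ c ∈ C, c ∈ C₀ := fun c hc => hfin.mem_toFinset.1 hc
  have hCP : ∀ c ∈ C, c ∈ P := fun c hc => hC₀.1 (hCsub c hc)
  obtain ⟨p₀, hp₀⟩ := hPne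
  obtain ⟨c₀, hc₀, -⟩ := hC₀.2 p₀ hp₀
  have hCne : C.Nonempty := ⟨c₀, hfin.mem_toFinset.2 hc₀⟩
  have hN1 : 1 ≤ C.card := Finset.card_pos.2 hCne
  have hNcov : (C.card : ℕ∞) ≤ covN μ D P (ε / 2) := by
    rw [← Set.Finite.encard_eq_coe_toFinset_card hfin]
    exact hle
  have hNtoNat : C.card ≤ (covN μ D P (ε / 2)).toNat := by
    rw [← ENat.coe_toNat hcov] at hNcov
    exact_mod_cast hNcov
  -- numeric setup
  set B : ℝ := elog2 (covN μ D P (ε / 2)) + Real.logb 2 (2 / δ) with hBdef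
  have h2δ : (2 : ℝ) ≤ 2 / δ := by
    rw [le_div_iff₀ hδ0]; nlinarith
  have hlogδ : 1 ≤ Real.logb 2 (2 / δ) := by
    have h := Real.logb_le_logb_of_le (b := 2) (by norm_num) (by norm_num : (0:ℝ) < 2) h2δ
    rwa [Real.logb_self_eq_one (by norm_num)] at h
  have htoNat1 : (1 : ℝ) ≤ ((covN μ D P (ε / 2)).toNat : ℝ) := by
    exact_mod_cast le_trans hN1 hNtoNat
  have helog0 : 0 ≤ elog2 (covN μ D P (ε / 2)) :=
    Real.logb_nonneg (by norm_num) htoNat1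
  have hB1 : 1 ≤ B := by rw [hBdef]; linarith
  have hε2pos : (0 : ℝ) < ε ^ 2 := by positivity
  set n : ℕ := ⌈64 * B / ε ^ 2⌉₊ with hndef
  have hpos : 0 < 64 * B / ε ^ 2 := div_pos (by linarith) hε2pos
  have hn0 : 0 < n := Nat.ceil_pos.2 hpos
  have hnlb : 64 * B / ε ^ 2 ≤ (n : ℝ) := Nat.le_ceil _
  have hnub : (n : ℝ) ≤ 1000 * B / ε ^ 2 := by
    have h1 : (n : ℝ) < 64 * B / ε ^ 2 + 1 := Nat.ceil_lt_add_one hpos.le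
    have h2 : (1 : ℝ) ≤ B / ε ^ 2 := by
      rw [le_div_iff₀ hε2pos]; nlinarith
    have e1 : 64 * B / ε ^ 2 = 64 * (B / ε ^ 2) := by ring
    have e2 : 1000 * B / ε ^ 2 = 1000 * (B / ε ^ 2) := by ring
    rw [e2]; rw [e1] at h1; linarith
  refine ⟨n, hn0, hnub, ?_⟩
  set ε' : ℝ := ε / 4 with hε'def
  have hε'0 : 0 < ε' := by rw [hε'def]; linarith
  have hε'1 : ε' ≤ 1 := by rw [hε'def]; linarith
  -- key numeric inequality
  have hN0 : (0 : ℝ) < (C.card : ℝ) := by exact_mod_cast hN1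
  have hkey : 2 * (C.card : ℝ) * Real.exp (-(n : ℝ) * ε' ^ 2 / 4) ≤ δ := by
    have hlogN : Real.logb 2 (C.card : ℝ) ≤ elog2 (covN μ D P (ε / 2)) := by
      apply Real.logb_le_logb_of_le (by norm_num) hN0
      exact_mod_cast hNtoNat
    have hx0 : (0 : ℝ) < 2 * (C.card : ℝ) / δ := by positivity
    have hsplit : Real.logb 2 (2 * (C.card : ℝ) / δ) =
        Real.logb 2 (C.card : ℝ) + Real.logb 2 (2 / δ) := by
      rw [show (2 : ℝ) * (C.card : ℝ) / δ = (C.card : ℝ) * (2 / δ) by ring,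
        Real.logb_mul (ne_of_gt hN0) (by positivity)]
    have hlog2pos : (0 : ℝ) < Real.log 2 := Real.log_pos (by norm_num)
    have hlogform : Real.log (2 * (C.card : ℝ) / δ) =
        Real.log 2 * Real.logb 2 (2 * (C.card : ℝ) / δ) := by
      rw [Real.logb]; field_simp
    have hlogB : Real.log (2 * (C.card : ℝ) / δ) ≤ B := by
      rw [hlogform, hsplit]
      have hlb : Real.logb 2 (C.card : ℝ) + Real.logb 2 (2 / δ) ≤ B := by
        rw [hBdef]; linarith
      have hlbnn : 0 ≤ Real.logb 2 (C.card : ℝ) + Real.logb 2 (2 / δ) := by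
        have := Real.logb_nonneg (b := 2) (by norm_num) (Nat.one_le_cast.2 hN1)
        linarith
      have hmul := mul_le_mul_of_nonneg_right Real.log_two_lt_d9.le hlbnn
      linarith
    have hexp : (n : ℝ) * ε' ^ 2 / 4 ≥ B := by
      have hmul := mul_le_mul_of_nonneg_right hnlb hε2pos.le
      rw [div_mul_cancel₀ _ (ne_of_gt hε2pos)] at hmul
      have e : (n : ℝ) * ε' ^ 2 / 4 = ((n : ℝ) * ε ^ 2) / 64 := by rw [hε'def]; ring
      rw [ge_iff_le, e]
      calc B = (64 * B) / 64 := by ring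
        _ ≤ ((n : ℝ) * ε ^ 2) / 64 := by gcongr ?_ / 64
    have hexple : Real.exp (-(n : ℝ) * ε' ^ 2 / 4) ≤ δ / (2 * (C.card : ℝ)) := by
      have h1 : Real.exp (-(n : ℝ) * ε' ^ 2 / 4) ≤
          Real.exp (-Real.log (2 * (C.card : ℝ) / δ)) := by
        apply Real.exp_le_exp.2
        have : -(n : ℝ) * ε' ^ 2 / 4 = -((n : ℝ) * ε' ^ 2 / 4) := by ring
        rw [this]
        linarith
      rw [Real.exp_neg, Real.exp_log hx0] at h1
      calc Real.exp (-(n : ℝ) * ε' ^ 2 / 4) ≤ (2 * (C.card : ℝ) / δ)⁻¹ := h1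
        _ = δ / (2 * (C.card : ℝ)) := by field_simp
    calc 2 * (C.card : ℝ) * Real.exp (-(n : ℝ) * ε' ^ 2 / 4)
        ≤ 2 * (C.card : ℝ) * (δ / (2 * (C.card : ℝ))) := by
          apply mul_le_mul_of_nonneg_left hexple (by positivity)
      _ = δ := by field_simp
  -- the ERM learner
  have hermex : ∀ s : Fin n → X × Bool, ∃ c ∈ C, ∀ c' ∈ C,
      (∑ i, phiF c (s i)) ≤ ∑ i, phiF c' (s i) :=
    fun s => C.exists_min_image (fun c => ∑ i, phiF c (s i)) hCne
  choose erm hermC hermMin using hermex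
  refine ⟨fun s => PMF.pure (erm s), ?_⟩
  intro pstar hps hbin
  -- events
  set Tgt : Set (X → ℝ) :=
    {p | Predictor p ∧ dnorm μ D (p - pstar) ≤ agTarget μ P D pstar + ε} with hTgt
  set Bad : Set (Fin n → X × Bool) :=
    {s | ∃ c ∈ C,
      s ∈ {s : Fin n → X × Bool | (n : ℝ) * ε' ≤
              ∑ i, (phiF c (s i) - pexp (exDist μ pstar) (phiF c))} ∪
          {s : Fin n → X × Bool | (n : ℝ) * ε' ≤
              ∑ i, (1 - phiF c (s i) -
                pexp (exDist μ pstar) fun z => 1 - phiF c z)}} with hBadDef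
  -- probability of the bad event
  have habs1 : ∀ (a b : X → ℝ), Predictor a → Predictor b → ∀ x, |a x - b x| ≤ 1 := by
    intro a b ha hb x
    rw [abs_le]
    exact ⟨by nlinarith [(ha x).1, (hb x).2], by nlinarith [(ha x).2, (hb x).1]⟩
  have hBadBound : (iid (exDist μ pstar) n).toOuterMeasure Bad ≤ ENNReal.ofReal δ := by
    have h1 := prob_finset_union (iid (exDist μ pstar) n) C
      (fun c => {s : Fin n → X × Bool | (n : ℝ) * ε' ≤
              ∑ i, (phiF c (s i) - pexp (exDist μ pstar) (phiF c))} ∪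
          {s : Fin n → X × Bool | (n : ℝ) * ε' ≤
              ∑ i, (1 - phiF c (s i) -
                pexp (exDist μ pstar) fun z => 1 - phiF c z)})
    have h2 : ∀ c ∈ C, (iid (exDist μ pstar) n).toOuterMeasure
        ({s : Fin n → X × Bool | (n : ℝ) * ε' ≤
              ∑ i, (phiF c (s i) - pexp (exDist μ pstar) (phiF c))} ∪
          {s : Fin n → X × Bool | (n : ℝ) * ε' ≤
              ∑ i, (1 - phiF c (s i) -
                pexp (exDist μ pstar) fun z => 1 - phiF c z)}) ≤
        ENNReal.ofReal (Real.exp (-(n : ℝ) * ε' ^ 2 / 4)) +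
          ENNReal.ofReal (Real.exp (-(n : ℝ) * ε' ^ 2 / 4)) := by
      intro c hc
      have hcpred : Predictor c := hP c (hCP c hc)
      refine le_trans (prob_union_le _ _ _) (add_le_add ?_ ?_)
      · exact chernoff (exDist μ pstar) (phiF c) (phiF_mem c hcpred) n hε'0 hε'1
      · exact chernoff (exDist μ pstar) (fun z => 1 - phiF c z)
          (fun z => ⟨by show (0:ℝ) ≤ 1 - phiF c z; linarith [(phiF_mem c hcpred z).2],
                     by show (1:ℝ) - phiF c z ≤ 1; linarith [(phiF_mem c hcpred z).1]⟩)
          n hε'0 hε'1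
    calc (iid (exDist μ pstar) n).toOuterMeasure Bad
        ≤ ∑ c ∈ C, (iid (exDist μ pstar) n).toOuterMeasure _ := h1
      _ ≤ ∑ _c ∈ C, (ENNReal.ofReal (Real.exp (-(n : ℝ) * ε' ^ 2 / 4)) +
            ENNReal.ofReal (Real.exp (-(n : ℝ) * ε' ^ 2 / 4))) :=
          Finset.sum_le_sum h2
      _ = (C.card : ℝ≥0∞) * (ENNReal.ofReal (Real.exp (-(n : ℝ) * ε' ^ 2 / 4)) +
            ENNReal.ofReal (Real.exp (-(n : ℝ) * ε' ^ 2 / 4))) := by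
          rw [Finset.sum_const, nsmul_eq_mul]
      _ ≤ ENNReal.ofReal δ := by
          rw [← ENNReal.ofReal_add (Real.exp_pos _).le (Real.exp_pos _).le,
            ← ENNReal.ofReal_natCast C.card,
            ← ENNReal.ofReal_mul (Nat.cast_nonneg _)]
          apply ENNReal.ofReal_le_ofReal
          calc (C.card : ℝ) * (Real.exp (-(n : ℝ) * ε' ^ 2 / 4) +
                Real.exp (-(n : ℝ) * ε' ^ 2 / 4))
              = 2 * (C.card : ℝ) * Real.exp (-(n : ℝ) * ε' ^ 2 / 4) := by ring
            _ ≤ δ := hkey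
  -- deterministic analysis on the good event
  have hdet : ∀ s : Fin n → X × Bool, s ∉ Bad → erm s ∈ Tgt := by
    intro s hsB
    have hgood : ∀ c ∈ C, |(∑ i, phiF c (s i)) -
        (n : ℝ) * pexp (exDist μ pstar) (phiF c)| ≤ (n : ℝ) * ε' := by
      intro c hc
      have hcpred : Predictor c := hP c (hCP c hc)
      have h1 : ¬ ((n : ℝ) * ε' ≤
          ∑ i, (phiF c (s i) - pexp (exDist μ pstar) (phiF c))) :=
        fun h => hsB ⟨c, hc, Or.inl h⟩
      have h2 : ¬ ((n : ℝ) * ε' ≤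
          ∑ i, (1 - phiF c (s i) -
            pexp (exDist μ pstar) fun z => 1 - phiF c z)) :=
        fun h => hsB ⟨c, hc, Or.inr h⟩
      rw [sum_sub_const] at h1
      have hpexp1 : pexp (exDist μ pstar) (fun z => 1 - phiF c z) =
          1 - pexp (exDist μ pstar) (phiF c) := by
        rw [pexp_sub (exDist μ pstar) (Bf := 1) (Bg := 1)
          (fun z => by norm_num)
          (fun z => by rw [abs_of_nonneg (phiF_mem c hcpred z).1]
                       exact (phiF_mem c hcpred z).2), pexp_const]
      rw [hpexp1] at h2
      have hsum2 : ∑ i, (1 - phiF c (s i) -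
          (1 - pexp (exDist μ pstar) (phiF c))) =
          (n : ℝ) * pexp (exDist μ pstar) (phiF c) - ∑ i, phiF c (s i) := by
        have hterm : ∀ i : Fin n, 1 - phiF c (s i) -
            (1 - pexp (exDist μ pstar) (phiF c)) =
            -(phiF c (s i) - pexp (exDist μ pstar) (phiF c)) := fun i => by ring
        rw [Finset.sum_congr rfl (fun i _ => hterm i), Finset.sum_neg_distrib,
          sum_sub_const]
        ring
      rw [hsum2] at h2
      rw [abs_le]
      constructor <;> linarith
    have hermP : erm s ∈ P := hCP _ (hermC s)
    have hermPred : Predictor (erm s) := hP _ hermP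
    have hbin' : ∀ c ∈ C, (∀ x, c x = 0 ∨ c x = 1) ∨ (∀ x, pstar x = 0 ∨ pstar x = 1) := by
      intro c hc
      rcases hbin with hb | hb
      · exact Or.inl (hb c (hCP c hc))
      · exact Or.inr hb
    have hmain : ∀ p' ∈ P, dnorm μ D (erm s - pstar) ≤ dnorm μ D (p' - pstar) + ε := by
      intro p' hp'
      obtain ⟨c', hc'₀, hcov'⟩ := hC₀.2 p' hp'
      have hc'C : c' ∈ C := hfin.mem_toFinset.2 hc'₀
      have hc'pred : Predictor c' := hP c' (hCP c' hc'C)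
      have hp'pred : Predictor p' := hP p' hp'
      have hRhat : pexp (exDist μ pstar) (phiF (erm s)) =
          pexp μ (fun x => |erm s x - pstar x|) :=
        risk_eq_L1 μ (erm s) pstar hermPred hps (hbin' _ (hermC s))
      have hRc' : pexp (exDist μ pstar) (phiF c') =
          pexp μ (fun x => |c' x - pstar x|) :=
        risk_eq_L1 μ c' pstar hc'pred hps (hbin' _ hc'C)
      -- ERM chain
      have g1 := abs_le.1 (hgood (erm s) (hermC s))
      have g2 := abs_le.1 (hgood c' hc'C)
      have g3 := hermMin s c' hc'C
      have hchain : (n : ℝ) * pexp (exDist μ pstar) (phiF (erm s)) ≤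
          (n : ℝ) * (pexp (exDist μ pstar) (phiF c') + ε' + ε') := by
        have hring : (n : ℝ) * (pexp (exDist μ pstar) (phiF c') + ε' + ε') =
            (n : ℝ) * pexp (exDist μ pstar) (phiF c') + (n : ℝ) * ε' + (n : ℝ) * ε' := by
          ring
        rw [hring]
        linarith [g1.1, g2.2, g3]
      have hnpos : (0 : ℝ) < (n : ℝ) := by exact_mod_cast hn0
      have hdiv : pexp (exDist μ pstar) (phiF (erm s)) ≤
          pexp (exDist μ pstar) (phiF c') + ε' + ε' :=
        (mul_le_mul_iff_right₀ hnpos).1 hchain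
      -- triangle inequality
      have htri : pexp μ (fun x => |c' x - pstar x|) ≤
          pexp μ (fun x => |p' x - pstar x|) + pexp μ (fun x => |p' x - c' x|) := by
        have hadd := pexp_add μ (f := fun x => |p' x - pstar x|)
          (g := fun x => |p' x - c' x|) (Bf := 1) (Bg := 1)
          (fun x => by rw [abs_abs]; exact habs1 p' pstar hp'pred hps x)
          (fun x => by rw [abs_abs]; exact habs1 p' c' hp'pred hc'pred x)
        have hmono := pexp_mono μ (f := fun x => |c' x - pstar x|)
          (g := fun x => |p' x - pstar x| + |p' x - c' x|) (Bf := 1) (Bg := 2)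
          (fun x => by rw [abs_abs]; exact habs1 c' pstar hc'pred hps x)
          (fun x => by
            show |(|p' x - pstar x| + |p' x - c' x|)| ≤ 2
            rw [abs_of_nonneg (by positivity)]
            linarith [habs1 p' pstar hp'pred hps x, habs1 p' c' hp'pred hc'pred x])
          (fun x => by
            show |c' x - pstar x| ≤ |p' x - pstar x| + |p' x - c' x|
            have h := abs_sub_le (c' x) (p' x) (pstar x)
            rw [abs_sub_comm (c' x) (p' x)] at h
            linarith)
        rw [hadd] at hmono
        exact hmono
      have hL1c : pexp μ (fun x => |p' x - c' x|) ≤ ε / 2 := by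
        refine le_trans ?_ hcov'
        exact L1_le_dnorm μ D hsgn hD (h := p' - c')
          (fun x => habs1 p' c' hp'pred hc'pred x)
      have hL1p : pexp μ (fun x => |p' x - pstar x|) ≤ dnorm μ D (p' - pstar) :=
        L1_le_dnorm μ D hsgn hD (h := p' - pstar)
          (fun x => habs1 p' pstar hp'pred hps x)
      have hDne : D.Nonempty := ⟨fun _ => 1, hsgn fun x => Or.inl rfl⟩
      have hdn : dnorm μ D (erm s - pstar) ≤ pexp μ (fun x => |erm s x - pstar x|) :=
        dnorm_le_L1 μ D hD hDne (fun x => habs1 (erm s) pstar hermPred hps x)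
      have hε'sum : ε' + ε' = ε / 2 := by rw [hε'def]; ring
      linarith [hdn, hRhat, hdiv, hRc', htri, hL1c, hL1p]
    refine ⟨hermPred, ?_⟩
    have hinf : dnorm μ D (erm s - pstar) - ε ≤ agTarget μ P D pstar := by
      have hne : ((fun p' => dnorm μ D (p' - pstar)) '' P).Nonempty :=
        ⟨_, ⟨p₀, hp₀, rfl⟩⟩
      show dnorm μ D (erm s - pstar) - ε ≤ sInf ((fun p' => dnorm μ D (p' - pstar)) '' P)
      refine le_csInf hne ?_
      rintro b ⟨p', hp', rfl⟩
      have := hmain p' hp'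
      simp only []
      linarith [hmain p' hp']
    linarith
  -- glue
  have hout : prob (outDist μ pstar (fun s => PMF.pure (erm s))) Tgt =
      (iid (exDist μ pstar) n).toOuterMeasure (erm ⁻¹' Tgt) := by
    show ((iid (exDist μ pstar) n).bind (fun s => PMF.pure (erm s))).toOuterMeasure Tgt = _
    rw [show ((iid (exDist μ pstar) n).bind (fun s => PMF.pure (erm s))) =
      PMF.map erm (iid (exDist μ pstar) n) from rfl, PMF.toOuterMeasure_map_apply]
  show ENNReal.ofReal (1 - δ) ≤ prob (outDist μ pstar (fun s => PMF.pure (erm s))) Tgt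
  rw [hout]
  refine prob_compl_bound _ ?_ hδ0.le hδ1.le hBadBound
  intro s hs
  by_contra hnb
  exact hs (hdet s hnb)
end
end
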